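/- arXiv:1109.1916 — 7 statements merged into one kernel-verified Lean document; each statement's English description precedes it below -/
import Mathlib

section
/- If a finite matrix group G ⊆ GL_n(F) (F algebraically closed of characteristic 0) has submultiplicative spectrum, then for every k ≥ 1 the set of elements of G whose order divides p^k is a subgroup of G; i.e., the set Δ_k(G) = {g ∈ G : g^{p^k} = 1} equals the subgroup Ω_k(G) it generates. -/
open Pointwise Polynomial

private lemma eig_pow_eq_one' {F : Type*} [Field F] {n : ℕ}
    {M : Matrix (Fin n) (Fin n) F} {N : ℕ} (hM : M ^ N = 1)
    {μ : F} (hμ : μ ∈ spectrum F M) : μ ^ N = 1 := by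
  set f : Module.End F (Fin n → F) := Matrix.toLinAlgEquiv' M with hf
  have hμ' : μ ∈ spectrum F f := by
    rw [hf]; rwa [AlgEquiv.spectrum_eq]
  have he : Module.End.HasEigenvalue f μ :=
    Module.End.hasEigenvalue_iff_mem_spectrum.2 hμ'
  obtain ⟨v, hv⟩ := he.exists_hasEigenvector
  have h1 : (f ^ N) v = μ ^ N • v := hv.pow_apply N
  have h2 : f ^ N = 1 := by
    rw [hf, ← map_pow, hM, map_one]
  rw [h2] at h1
  have h3 : (μ ^ N - 1) • v = 0 := by
    rw [sub_smul, one_smul, ← h1]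
    simp
  rcases smul_eq_zero.mp h3 with h | h
  · exact sub_eq_zero.mp h
  · exact absurd h hv.2

private lemma pow_eq_one_of_spec' {F : Type*} [Field F] [IsAlgClosed F] {n : ℕ}
    {M : Matrix (Fin n) (Fin n) F} {m N : ℕ} (hmo : M ^ m = 1)
    (hmF : (m : F) ≠ 0)
    (hspec : ∀ μ ∈ spectrum F M, μ ^ N = 1) : M ^ N = 1 := by
  set f : Module.End F (Fin n → F) := Matrix.toLinAlgEquiv' M with hf
  suffices h : f ^ N = 1 by
    have := congrArg Matrix.toLinAlgEquiv'.symm h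
    rw [← map_pow] at this
    simpa using this
  have hfm : f ^ m = 1 := by rw [hf, ← map_pow, hmo, map_one]
  have hdvd : minpoly F f ∣ X ^ m - C 1 := by
    apply minpoly.dvd
    simp [map_pow, hfm]
  have hsep : (minpoly F f).Separable :=
    (separable_X_pow_sub_C (1 : F) hmF one_ne_zero).of_dvd hdvd
  have hnodup : (minpoly F f).roots.Nodup := nodup_roots hsep
  have hint : IsIntegral F f := Algebra.IsIntegral.isIntegral f
  have hmonic := minpoly.monic hint
  have hsplits : (minpoly F f).Splits := IsAlgClosed.splits _
  have hprod : minpoly F f = ((minpoly F f).roots.map fun a => X - C a).prod :=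
    hsplits.eq_prod_roots_of_monic hmonic
  set s : Finset F := ⟨(minpoly F f).roots, hnodup⟩ with hs
  have hprod2 : minpoly F f = ∏ μ ∈ s, (X - C μ) := by
    rw [hprod]; rfl
  have hroot_spec : ∀ μ ∈ s, μ ^ N = 1 := by
    intro μ hμ
    have hr : (minpoly F f).IsRoot μ := by
      have : μ ∈ (minpoly F f).roots := hμ
      exact isRoot_of_mem_roots this
    have heig : f.HasEigenvalue μ := Module.End.hasEigenvalue_iff_isRoot.2 hr
    have : μ ∈ spectrum F f := Module.End.hasEigenvalue_iff_mem_spectrum.1 heig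
    have : μ ∈ spectrum F M := by rwa [hf, AlgEquiv.spectrum_eq] at this
    exact hspec μ this
  have hdvd2 : minpoly F f ∣ X ^ N - C 1 := by
    rw [hprod2]
    apply Finset.prod_dvd_of_coprime
    · exact (pairwise_coprime_X_sub_C Function.injective_id).set_pairwise _
    · intro μ hμ
      rw [dvd_iff_isRoot]
      simp [IsRoot, hroot_spec μ hμ]
  obtain ⟨q, hq⟩ := hdvd2
  have h0 : Polynomial.aeval (R := F) f (X ^ N - C 1) = 0 := by rw [hq, map_mul, minpoly.aeval F f, zero_mul]
  have h1 : f ^ N - 1 = 0 := by simpa [map_pow] using h0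
  exact sub_eq_zero.mp h1

/-- If a finite matrix group `G ⊆ GL_n(F)` (`F` algebraically closed of
characteristic zero) has submultiplicative spectrum, then for every `k ≥ 1` the set
`Δ_k(G) = {g ∈ G : g ^ (p ^ k) = 1}` of elements of order dividing `p ^ k` equals the
subgroup `Ω_k(G)` it generates; in particular it is a subgroup of `G`. -/
theorem stmt1 {F : Type*} [Field F] [IsAlgClosed F] [CharZero F] {n : ℕ}
    (G : Subgroup (GL (Fin n) F)) (hfin : Finite G) (p : ℕ) (hp : p.Prime) (k : ℕ) (hk : 1 ≤ k)
    (hS : ∀ X Y : GL (Fin n) F, X ∈ G → Y ∈ G →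
      spectrum F ((X * Y : GL (Fin n) F) : Matrix (Fin n) (Fin n) F) ⊆
        spectrum F (X : Matrix (Fin n) (Fin n) F) * spectrum F (Y : Matrix (Fin n) (Fin n) F)) :
    (Subgroup.closure {g : GL (Fin n) F | g ∈ G ∧ g ^ (p ^ k) = 1} : Set (GL (Fin n) F)) =
      {g : GL (Fin n) F | g ∈ G ∧ g ^ (p ^ k) = 1} := by
  haveI := hfin
  -- every element of G has finite order
  have horder : ∀ g : GL (Fin n) F, g ∈ G → ∃ m : ℕ, m ≠ 0 ∧ g ^ m = 1 := by
    intro g hg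
    refine ⟨orderOf (⟨g, hg⟩ : G), (orderOf_pos (⟨g, hg⟩ : G)).ne', ?_⟩
    have h := pow_orderOf_eq_one (⟨g, hg⟩ : G)
    have := congrArg (Subtype.val) h
    simpa using this
  -- key closure property
  have key : ∀ A B : GL (Fin n) F, A ∈ G → B ∈ G → A ^ (p ^ k) = 1 → B ^ (p ^ k) = 1 →
      (A * B) ^ (p ^ k) = 1 := by
    intro A B hA hB hAN hBN
    obtain ⟨m, hm, hmo⟩ := horder (A * B) (mul_mem hA hB)
    have hAmat : ((A : Matrix (Fin n) (Fin n) F)) ^ (p ^ k) = 1 := by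
      have := congrArg (Units.val) hAN
      simpa using this
    have hBmat : ((B : Matrix (Fin n) (Fin n) F)) ^ (p ^ k) = 1 := by
      have := congrArg (Units.val) hBN
      simpa using this
    have hABm : ((A * B : GL (Fin n) F) : Matrix (Fin n) (Fin n) F) ^ m = 1 := by
      have := congrArg (Units.val) hmo
      simpa using this
    have hmat : ((A * B : GL (Fin n) F) : Matrix (Fin n) (Fin n) F) ^ (p ^ k) = 1 := by
      apply pow_eq_one_of_spec' hABm (Nat.cast_ne_zero.mpr hm)
      intro μ hμ
      obtain ⟨a, ha, b, hb, rfl⟩ := hS A B hA hB hμ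
      have haN : a ^ (p ^ k) = 1 := eig_pow_eq_one' hAmat ha
      have hbN : b ^ (p ^ k) = 1 := eig_pow_eq_one' hBmat hb
      rw [mul_pow, haN, hbN, one_mul]
    exact Units.ext (by simpa using hmat)
  let H : Subgroup (GL (Fin n) F) :=
    { carrier := {g : GL (Fin n) F | g ∈ G ∧ g ^ (p ^ k) = 1}
      one_mem' := ⟨one_mem G, one_pow _⟩
      mul_mem' := fun {a b} ha hb => ⟨mul_mem ha.1 hb.1, key a b ha.1 hb.1 ha.2 hb.2⟩
      inv_mem' := fun {a} ha => ⟨inv_mem ha.1, by rw [inv_pow, ha.2, inv_one]⟩ }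
  have hset : {g : GL (Fin n) F | g ∈ G ∧ g ^ (p ^ k) = 1} = (H : Set (GL (Fin n) F)) := rfl
  rw [hset, Subgroup.closure_eq]
end

section
/- A finite group G has property Ŝ if and only if for every pair of elements x, y ∈ G, the subgroup ⟨x, y⟩ generated by x and y has property Ŝ. -/
open Pointwise

/-- A finite group `G` has property Ŝ (over `F`) if for every subgroup `K ≤ G` and every
finite-dimensional representation `ρ : K → GL_n(F)`, the matrix group `ρ(K)` has
submultiplicative spectrum: `σ(ρ(a)ρ(b)) ⊆ σ(ρ(a))·σ(ρ(b))` for all `a, b ∈ K`. -/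
def PropertyShat (F : Type*) [Field F] (G : Type*) [Group G] : Prop :=
  ∀ (K : Subgroup G) (n : ℕ) (ρ : K →* GL (Fin n) F) (a b : K),
    spectrum F ((ρ (a * b) : GL (Fin n) F) : Matrix (Fin n) (Fin n) F) ⊆
      spectrum F ((ρ a : GL (Fin n) F) : Matrix (Fin n) (Fin n) F) *
        spectrum F ((ρ b : GL (Fin n) F) : Matrix (Fin n) (Fin n) F)


lemma shat_subgroup {F : Type*} [Field F] {G : Type*} [Group G]
    (h : PropertyShat F G) (H : Subgroup G) : PropertyShat F H := by
  intro K n ρ a b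
  let e := Subgroup.equivMapOfInjective K H.subtype H.subtype_injective
  have key := h (K.map H.subtype) n (ρ.comp e.symm.toMonoidHom) (e a) (e b)
  have e1 : (ρ.comp e.symm.toMonoidHom) (e a * e b) = ρ (a * b) := by
    rw [← map_mul e a b]; simp
  have e2 : (ρ.comp e.symm.toMonoidHom) (e a) = ρ a := by simp
  have e3 : (ρ.comp e.symm.toMonoidHom) (e b) = ρ b := by simp
  rw [e1, e2, e3] at key
  exact key

/-- A finite group `G` has property Ŝ if and only if for every pair of
elements `x, y ∈ G` the subgroup `⟨x, y⟩` generated by `x` and `y` has property Ŝ. -/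
theorem stmt6 {F : Type*} [Field F] [IsAlgClosed F] [CharZero F]
    {G : Type*} [Group G] [Finite G] :
    PropertyShat F G ↔
      ∀ x y : G, PropertyShat F (Subgroup.closure ({x, y} : Set G)) := by
  constructor
  · intro h x y
    exact shat_subgroup h _
  · intro h K n ρ a b
    set H : Subgroup G := Subgroup.closure ({(a : G), (b : G)} : Set G) with hHdef
    have hHK : H ≤ K := by
      rw [hHdef]
      apply Subgroup.closure_le K |>.mpr
      rintro z (rfl | rfl)
      · exact a.2
      · exact b.2
    have ha : (a : G) ∈ H := Subgroup.subset_closure (by simp)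
    have hb : (b : G) ∈ H := Subgroup.subset_closure (by simp)
    have hH := h (a : G) (b : G)
    let ρ' : (⊤ : Subgroup H) →* GL (Fin n) F :=
      ρ.comp ((Subgroup.inclusion hHK).comp (Subgroup.subtype ⊤))
    have key := hH ⊤ n ρ' ⟨⟨(a : G), ha⟩, trivial⟩ ⟨⟨(b : G), hb⟩, trivial⟩
    have e1 : ρ' (⟨⟨(a : G), ha⟩, trivial⟩ * ⟨⟨(b : G), hb⟩, trivial⟩) = ρ (a * b) := by
      simp only [ρ', MonoidHom.comp_apply]
      congr 1
    have e2 : ρ' ⟨⟨(a : G), ha⟩, trivial⟩ = ρ a := by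
      simp only [ρ', MonoidHom.comp_apply]
      congr 1
    have e3 : ρ' ⟨⟨(b : G), hb⟩, trivial⟩ = ρ b := by
      simp only [ρ', MonoidHom.comp_apply]
      congr 1
    rw [e1, e2, e3] at key
    exact key
end

section
/- Let p be an odd prime and G ⊆ GL_p(F) an irreducible monomial p-group of exponent p containing the cyclic permutation matrix P, with all non-diagonal elements of the form DP^k for diagonal D of determinant 1. Then the p-th term of the lower central series of G is trivial; i.e., the nilpotency class of G is at most p − 1. -/
open scoped commutatorElement Fin.NatCast Fin.IntCast Fin.CommRing
section Aux

variable {F : Type*} [Field F] {p : ℕ} [NeZero p]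

private theorem stmt10Pk (k : ℕ) :
    (Matrix.of fun i j : Fin p => if i = j + 1 then (1:F) else 0) ^ k
      = Matrix.of fun i j => if i = j + (k : Fin p) then 1 else 0 := by
  induction k with
  | zero => ext i j; simp [Matrix.one_apply, eq_comm]
  | succ k ih =>
      rw [pow_succ, ih]
      ext i j
      rw [Matrix.mul_apply]
      simp only [Matrix.of_apply]
      rw [Finset.sum_eq_single (j+1)]
      · have : j + 1 + (k : Fin p) = j + ((k+1 : ℕ) : Fin p) := by push_cast; ring
        simp [this]
      · intro b _ hb; simp [hb]
      · intro h; simp at h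

private theorem stmt10Pk_mul_diag (a : ℕ) (e : Fin p → F) :
    (Matrix.of fun i j : Fin p => if i = j + 1 then (1:F) else 0) ^ a * Matrix.diagonal e
      = Matrix.diagonal (fun i => e (i - a)) *
        (Matrix.of fun i j : Fin p => if i = j + 1 then (1:F) else 0) ^ a := by
  rw [stmt10Pk]
  ext i j
  rw [Matrix.mul_diagonal, Matrix.diagonal_mul]
  simp only [Matrix.of_apply]
  by_cases h : i = j + (a : Fin p)
  · simp [h]
  · simp [h]

private theorem stmt10monomial_mul (a b : ℕ) (d e : Fin p → F) :
    (Matrix.diagonal d * (Matrix.of fun i j : Fin p => if i = j + 1 then (1:F) else 0) ^ a) *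
    (Matrix.diagonal e * (Matrix.of fun i j : Fin p => if i = j + 1 then (1:F) else 0) ^ b)
      = Matrix.diagonal (fun i => d i * e (i - a)) *
        (Matrix.of fun i j : Fin p => if i = j + 1 then (1:F) else 0) ^ (a + b) := by
  rw [mul_assoc, ← mul_assoc _ (Matrix.diagonal e), stmt10Pk_mul_diag, mul_assoc, ← pow_add,
    ← mul_assoc, Matrix.diagonal_mul_diagonal]

private theorem stmt10comm_identity (a b : ℕ) (d e : Fin p → F)
    (hd : ∀ i, d i ≠ 0) (he : ∀ i, e i ≠ 0) :
    Matrix.diagonal (fun i => d i * (d (i - (b:Fin p)))⁻¹ * (e (i - (a:Fin p)) * (e i)⁻¹)) *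
      ((Matrix.diagonal e * (Matrix.of fun i j : Fin p => if i = j + 1 then (1:F) else 0) ^ b) *
       (Matrix.diagonal d * (Matrix.of fun i j : Fin p => if i = j + 1 then (1:F) else 0) ^ a))
      = (Matrix.diagonal d * (Matrix.of fun i j : Fin p => if i = j + 1 then (1:F) else 0) ^ a) *
        (Matrix.diagonal e * (Matrix.of fun i j : Fin p => if i = j + 1 then (1:F) else 0) ^ b) := by
  rw [stmt10monomial_mul, stmt10monomial_mul, ← mul_assoc, Matrix.diagonal_mul_diagonal]
  have : b + a = a + b := by ring
  rw [this]
  congr 1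
  refine congrArg _ (funext fun i => ?_)
  have h1 : e i ≠ 0 := he i
  have h2 : d (i - (b:Fin p)) ≠ 0 := hd _
  field_simp

/-- The coercion of a commutator of two monomial units. -/
private theorem stmt10comm_coe (u v : GL (Fin p) F) (d e : Fin p → F) (a b : ℕ)
    (hd : ∀ i, d i ≠ 0) (he : ∀ i, e i ≠ 0)
    (hu : (u : Matrix (Fin p) (Fin p) F)
        = Matrix.diagonal d * (Matrix.of fun i j : Fin p => if i = j + 1 then (1:F) else 0) ^ a)
    (hv : (v : Matrix (Fin p) (Fin p) F)
        = Matrix.diagonal e * (Matrix.of fun i j : Fin p => if i = j + 1 then (1:F) else 0) ^ b) :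
    ((⁅u, v⁆ : GL (Fin p) F) : Matrix (Fin p) (Fin p) F)
      = Matrix.diagonal
          (fun i => d i * (d (i - (b:Fin p)))⁻¹ * (e (i - (a:Fin p)) * (e i)⁻¹)) := by
  have hgrp : ⁅u, v⁆ * (v * u) = u * v := by group
  have h1 : ((⁅u, v⁆ : GL (Fin p) F) : Matrix (Fin p) (Fin p) F) * ((v * u : GL (Fin p) F) : Matrix (Fin p) (Fin p) F)
      = ((u * v : GL (Fin p) F) : Matrix (Fin p) (Fin p) F) := by
    rw [← Units.val_mul, hgrp]
  have h2 : Matrix.diagonal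
        (fun i => d i * (d (i - (b:Fin p)))⁻¹ * (e (i - (a:Fin p)) * (e i)⁻¹)) *
        ((v * u : GL (Fin p) F) : Matrix (Fin p) (Fin p) F)
      = ((u * v : GL (Fin p) F) : Matrix (Fin p) (Fin p) F) := by
    rw [Units.val_mul, Units.val_mul, hu, hv]
    exact stmt10comm_identity a b d e hd he
  exact (Units.isUnit (v * u)).mul_right_cancel (h1.trans h2.symm)

private theorem stmt10telescope (d : Fin p → F) (b : ℕ) (i : Fin p) :
    (∏ t ∈ Finset.range b, d (i - (t : Fin p))) * d (i - (b : Fin p))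
      = d i * ∏ t ∈ Finset.range b, d ((i - 1) - (t : Fin p)) := by
  rw [← Finset.prod_range_succ (fun t => d (i - (t : Fin p))) b]
  rw [Finset.prod_range_succ' (fun t => d (i - (t : Fin p))) b]
  have h0 : i - ((0:ℕ) : Fin p) = i := by push_cast; ring
  rw [h0, mul_comm]
  congr 1
  refine Finset.prod_congr rfl fun t _ => ?_
  congr 1
  push_cast
  ring

end Aux

section ZModAux

noncomputable def stmt10Sh (p : ℕ) [NeZero p] : Module.End (ZMod p) (Fin p → ZMod p) :=
  LinearMap.funLeft (ZMod p) (ZMod p) (fun i => i - 1)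

theorem stmt10Sh_pow {p : ℕ} [NeZero p] (n : ℕ) (x : Fin p → ZMod p) (i : Fin p) :
    ((stmt10Sh p ^ n) x) i = x (i - (n : Fin p)) := by
  induction n generalizing x i with
  | zero => simp
  | succ n ih =>
      rw [pow_succ, Module.End.mul_apply]
      show ((stmt10Sh p ^ n) ((stmt10Sh p) x)) i = _
      rw [ih]
      simp only [stmt10Sh, LinearMap.funLeft_apply]
      congr 1
      push_cast
      ring

theorem stmt10L_pow_p {p : ℕ} [Fact p.Prime] (x : Fin p → ZMod p) :
    ((1 - stmt10Sh p) ^ p) x = 0 := by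
  haveI : NeZero p := ⟨(Fact.out : p.Prime).ne_zero⟩
  have hS : (stmt10Sh p) ^ p = 1 := by
    apply LinearMap.ext
    intro y
    funext i
    rw [stmt10Sh_pow]
    simp
  haveI : CharP (Module.End (ZMod p) (Fin p → ZMod p)) p :=
    charP_of_injective_algebraMap' (ZMod p) p
  have h := sub_pow_char_of_commute (R := Module.End (ZMod p) (Fin p → ZMod p)) p
    (Commute.one_left (stmt10Sh p))
  rw [h, hS, one_pow, sub_self]
  rfl

variable {F : Type*} [Field F]

noncomputable def stmt10zf (ζ : F) (p : ℕ) [NeZero p] : ZMod p → F := fun a => ζ ^ a.val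

theorem stmt10zf_add {p : ℕ} [NeZero p] {ζ : F} (hζ : IsPrimitiveRoot ζ p) (a b : ZMod p) :
    stmt10zf ζ p (a + b) = stmt10zf ζ p a * stmt10zf ζ p b := by
  unfold stmt10zf
  rw [← pow_add, ZMod.val_add]
  conv_rhs => rw [← Nat.div_add_mod (a.val + b.val) p]
  rw [pow_add, pow_mul, hζ.pow_eq_one, one_pow, one_mul]

theorem stmt10zf_zero {p : ℕ} [NeZero p] (ζ : F) : stmt10zf ζ p 0 = 1 := by
  simp [stmt10zf]

theorem stmt10zf_ne_zero {p : ℕ} [NeZero p] {ζ : F} (hζ : IsPrimitiveRoot ζ p) (a : ZMod p) :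
    stmt10zf ζ p a ≠ 0 := by
  have : ζ ≠ 0 := by
    intro h
    have := hζ.pow_eq_one
    rw [h, zero_pow (NeZero.ne p)] at this
    exact zero_ne_one this
  exact pow_ne_zero _ this

theorem stmt10zf_sub {p : ℕ} [NeZero p] {ζ : F} (hζ : IsPrimitiveRoot ζ p) (a b : ZMod p) :
    stmt10zf ζ p (a - b) = stmt10zf ζ p a * (stmt10zf ζ p b)⁻¹ := by
  have h := stmt10zf_add hζ (a - b) b
  rw [sub_add_cancel] at h
  rw [h, mul_inv_cancel_right₀ (stmt10zf_ne_zero hζ b)]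

theorem stmt10key_log {p : ℕ} [NeZero p] {ζ : F} (hζ : IsPrimitiveRoot ζ p)
    (z w : Fin p → F) (hw : ∀ i, w i ≠ 0)
    (hzw : ∀ i, z i = w i * (w (i - 1))⁻¹)
    (hzp : ∀ i, z i ^ p = 1) :
    ∃ x : Fin p → ZMod p, ∀ i, z i = stmt10zf ζ p (x i - x (i - 1)) := by
  have hstep : ∀ i : Fin p, (w i) ^ p = (w (i - 1)) ^ p := by
    intro i
    have h := hzp i
    rw [hzw i, mul_pow, inv_pow] at h
    field_simp at h
    exact div_eq_one_iff_eq (pow_ne_zero p (hw _)) |>.mp h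
  have hconst : ∀ i : Fin p, (w i) ^ p = (w 0) ^ p := by
    have hn : ∀ n : ℕ, (w (n : Fin p)) ^ p = (w 0) ^ p := by
      intro n
      induction n with
      | zero => simp
      | succ n ih =>
          rw [← ih]
          have h := hstep ((n + 1 : ℕ) : Fin p)
          rw [h]
          congr 2
          push_cast
          ring
    intro i
    have := hn i.val
    rwa [Fin.cast_val_eq_self] at this
  have hw' : ∀ i : Fin p, (w i * (w 0)⁻¹) ^ p = 1 := by
    intro i
    rw [mul_pow, inv_pow, hconst i]
    exact mul_inv_cancel₀ (pow_ne_zero p (hw 0))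
  have hchoice : ∀ i : Fin p, ∃ k : ℕ, k < p ∧ ζ ^ k = w i * (w 0)⁻¹ := by
    intro i
    obtain ⟨k, hk, hke⟩ := hζ.eq_pow_of_pow_eq_one (hw' i)
    exact ⟨k, hk, hke⟩
  choose k hk hke using hchoice
  refine ⟨fun i => (k i : ZMod p), fun i => ?_⟩
  have hzf : ∀ i : Fin p, stmt10zf ζ p ((k i : ZMod p)) = w i * (w 0)⁻¹ := by
    intro i
    unfold stmt10zf
    rw [ZMod.val_natCast_of_lt (hk i)]
    exact hke i
  rw [stmt10zf_sub hζ, hzf, hzf, hzw i]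
  have h0 : w 0 ≠ 0 := hw 0
  have h1 : w (i - 1) ≠ 0 := hw _
  field_simp

end ZModAux

/-- Let `p` be an odd prime and `G ⊆ GL_p(F)` an irreducible monomial
`p`-group of exponent `p` containing the cyclic permutation matrix `P`, in which every
element is either diagonal or of the form `D P^k` with `D` diagonal of determinant `1`
and `1 ≤ k ≤ p - 1`.  Then the `p`-th term of the lower central series of `G` is
trivial; i.e., the nilpotency class of `G` is at most `p - 1`. -/
theorem stmt10 {F : Type*} [Field F] [IsAlgClosed F] [CharZero F]
    (p : ℕ) [Fact p.Prime] (hodd : Odd p)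
    (G : Subgroup (GL (Fin p) F)) (hpG : IsPGroup p G) (hfin : Finite G)
    (hexp : ∀ g ∈ G, g ^ p = 1)
    (P : Matrix (Fin p) (Fin p) F) (hP : P = Matrix.of fun i j => if i = j + 1 then 1 else 0)
    (hPmem : ∃ Pu : GL (Fin p) F, (Pu : Matrix (Fin p) (Fin p) F) = P ∧ Pu ∈ G)
    (hform : ∀ g ∈ G,
      (∃ d : Fin p → F, (g : Matrix (Fin p) (Fin p) F) = Matrix.diagonal d) ∨
      (∃ (d : Fin p → F) (k : ℕ), 1 ≤ k ∧ k ≤ p - 1 ∧ (Matrix.diagonal d).det = 1 ∧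
        (g : Matrix (Fin p) (Fin p) F) = Matrix.diagonal d * P ^ k))
    (hirr : ∀ W : Submodule F (Fin p → F),
      (∀ g ∈ G, W.map (Matrix.mulVecLin (g : Matrix (Fin p) (Fin p) F)) ≤ W) →
      W = ⊥ ∨ W = ⊤) :
    lowerCentralSeries G p = ⊥ := by
  haveI : NeZero p := ⟨(Fact.out : p.Prime).ne_zero⟩
  subst hP
  haveI : NeZero ((p : ℕ) : F) := ⟨Nat.cast_ne_zero.mpr (NeZero.ne p)⟩
  obtain ⟨ζ, hζ⟩ := HasEnoughRootsOfUnity.exists_primitiveRoot F p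
  set S := stmt10Sh p with hSdef
  set L : Module.End (ZMod p) (Fin p → ZMod p) := 1 - S with hLdef
  have hSapp : ∀ (x : Fin p → ZMod p) (i : Fin p), (S x) i = x (i - 1) := by
    intro x i
    have h := stmt10Sh_pow (p := p) 1 x i
    rw [pow_one] at h
    rw [hSdef, h]
    norm_num
  have hLapp : ∀ (x : Fin p → ZMod p) (i : Fin p), (L x) i = x i - x (i - 1) := by
    intro x i
    have h1 : (L x) i = x i - (S x) i := by
      rw [hLdef, LinearMap.sub_apply, Module.End.one_apply, Pi.sub_apply]
    rw [h1, hSapp]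
  -- standard form of elements of G
  have hstd : ∀ g : GL (Fin p) F, g ∈ G → ∃ (d : Fin p → F) (a : ℕ), (∀ i, d i ≠ 0) ∧
      (g : Matrix (Fin p) (Fin p) F)
        = Matrix.diagonal d * (Matrix.of fun i j : Fin p => if i = j + 1 then (1:F) else 0) ^ a := by
    intro g hg
    rcases hform g hg with ⟨d, hdg⟩ | ⟨d, k, _, _, hdet, hdg⟩
    · refine ⟨d, 0, ?_, by simpa using hdg⟩
      intro i
      have hu : IsUnit (g : Matrix (Fin p) (Fin p) F).det :=
        (Matrix.isUnit_iff_isUnit_det _).mp g.isUnit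
      rw [hdg, Matrix.det_diagonal] at hu
      intro h0
      rw [Finset.prod_eq_zero (Finset.mem_univ i) h0] at hu
      exact not_isUnit_zero hu
    · refine ⟨d, k, ?_, hdg⟩
      intro i
      rw [Matrix.det_diagonal] at hdet
      intro h0
      rw [Finset.prod_eq_zero (Finset.mem_univ i) h0] at hdet
      exact one_ne_zero hdet.symm
  -- entries of diagonal elements of G are p-th roots of unity
  have hdiagp : ∀ g : GL (Fin p) F, g ∈ G → ∀ z : Fin p → F,
      (g : Matrix (Fin p) (Fin p) F) = Matrix.diagonal z → ∀ i, z i ^ p = 1 := by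
    intro g hg z hz i
    have h := hexp g hg
    have h2 : ((g : Matrix (Fin p) (Fin p) F)) ^ p = 1 := by
      have := congrArg (Units.val) h
      rw [Units.val_pow_eq_pow_val] at this
      simpa using this
    rw [hz, Matrix.diagonal_pow] at h2
    have := congrFun (congrFun h2 i) i
    simpa [Matrix.diagonal_apply_eq, Matrix.one_apply] using this
  -- the subgroups W j
  let Wc : ℕ → Subgroup G := fun j =>
    { carrier := {g : G | ∃ x : Fin p → ZMod p,
        ((g : GL (Fin p) F) : Matrix (Fin p) (Fin p) F)
          = Matrix.diagonal (fun i => stmt10zf ζ p (((L ^ j) x) i))},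
      one_mem' := by
        refine ⟨0, ?_⟩
        rw [map_zero]
        simp [stmt10zf_zero]
      mul_mem' := by
        rintro a b ⟨x, hx⟩ ⟨y, hy⟩
        refine ⟨x + y, ?_⟩
        push_cast
        rw [hx, hy, Matrix.diagonal_mul_diagonal]
        refine congrArg Matrix.diagonal (funext fun i => ?_)
        rw [map_add, Pi.add_apply, stmt10zf_add hζ]
      inv_mem' := by
        rintro a ⟨x, hx⟩
        refine ⟨-x, ?_⟩
        have hmul : ((a : GL (Fin p) F) : Matrix (Fin p) (Fin p) F) *
            Matrix.diagonal (fun i => stmt10zf ζ p (((L ^ j) (-x)) i)) = 1 := by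
          rw [hx, Matrix.diagonal_mul_diagonal]
          have h1 : (fun i => stmt10zf ζ p (((L ^ j) x) i) * stmt10zf ζ p (((L ^ j) (-x)) i))
              = fun _ => (1:F) := by
            funext i
            rw [map_neg, ← stmt10zf_add hζ]
            simp [stmt10zf_zero]
          rw [h1]
          exact Matrix.diagonal_one
        have hc : ((a⁻¹ : ↥G) : GL (Fin p) F) = ((a : ↥G) : GL (Fin p) F)⁻¹ := rfl
        rw [hc]
        exact Units.inv_eq_of_mul_eq_one_right hmul }
  -- membership of commutators
  have hWmem : ∀ j : ℕ, ∀ g h : ↥G, g ∈ Wc (j+1) → ⁅g, h⁆ ∈ Wc (j+2) := by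
    intro j g h hg
    obtain ⟨x, hx⟩ := hg
    obtain ⟨e, b, he, hhe⟩ := hstd (h : GL (Fin p) F) h.2
    set d : Fin p → F := fun i => stmt10zf ζ p (((L ^ (j+1)) x) i) with hddef
    have hd : ∀ i, d i ≠ 0 := fun i => stmt10zf_ne_zero hζ _
    have hgd : ((g : GL (Fin p) F) : Matrix (Fin p) (Fin p) F)
        = Matrix.diagonal d *
          (Matrix.of fun i j : Fin p => if i = j + 1 then (1:F) else 0) ^ 0 := by
      rw [pow_zero, mul_one]; exact hx
    have hcoe : ((⁅g, h⁆ : G) : GL (Fin p) F) = ⁅(g : GL (Fin p) F), (h : GL (Fin p) F)⁆ := by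
      simp [commutatorElement_def]
    have hcm := stmt10comm_coe (g : GL (Fin p) F) (h : GL (Fin p) F) d e 0 b hd he hgd hhe
    rw [← hcoe] at hcm
    refine ⟨(∑ t ∈ Finset.range b, S ^ t) x, ?_⟩
    rw [hcm]
    refine congrArg Matrix.diagonal (funext fun i => ?_)
    have h0 : i - ((0:ℕ) : Fin p) = i := by push_cast; ring
    rw [h0, mul_inv_cancel₀ (he i), mul_one, hddef]
    rw [← stmt10zf_sub hζ]
    congr 1
    have hSb : ((L ^ (j+1)) x) (i - (b:Fin p)) = ((S ^ b) ((L ^ (j+1)) x)) i := by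
      rw [hSdef, stmt10Sh_pow]
    rw [hSb]
    -- now algebra of endomorphisms
    have hcomm : Commute S L := by
      rw [hLdef]
      exact (Commute.one_right S).sub_right (Commute.refl S)
    have hQ : Commute (∑ t ∈ Finset.range b, S ^ t) L :=
      Commute.sum_left _ _ _ (fun t _ => hcomm.pow_left t)
    have h2 : (∑ t ∈ Finset.range b, S ^ t) * (S - 1) = S ^ b - 1 := geom_sum_mul S b
    have hQL : (∑ t ∈ Finset.range b, S ^ t) * L = 1 - S ^ b := by
      calc (∑ t ∈ Finset.range b, S ^ t) * L
          = -((∑ t ∈ Finset.range b, S ^ t) * (S - 1)) := by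
            rw [hLdef, mul_sub, mul_sub, neg_sub]
        _ = -(S ^ b - 1) := by rw [h2]
        _ = 1 - S ^ b := neg_sub _ _
    have hkey : L ^ (j+2) * (∑ t ∈ Finset.range b, S ^ t) = (1 - S ^ b) * L ^ (j+1) := by
      have hc2 : Commute (1 - S ^ b) (L ^ (j+1)) :=
        ((Commute.one_left L).sub_left ((hcomm.pow_left b))).pow_right (j+1)
      calc L ^ (j+2) * (∑ t ∈ Finset.range b, S ^ t)
          = L ^ (j+1) * (L * (∑ t ∈ Finset.range b, S ^ t)) := by
            rw [← mul_assoc, ← pow_succ]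
        _ = L ^ (j+1) * ((∑ t ∈ Finset.range b, S ^ t) * L) := by rw [hQ.eq]
        _ = L ^ (j+1) * (1 - S ^ b) := by rw [hQL]
        _ = (1 - S ^ b) * L ^ (j+1) := (hc2.eq).symm
    have happ := congrArg (fun f : Module.End (ZMod p) (Fin p → ZMod p) => f x) hkey
    simp only [Module.End.mul_apply] at happ
    have hsub : (1 - S ^ b) ((L ^ (j+1)) x) = (L ^ (j+1)) x - (S ^ b) ((L ^ (j+1)) x) := by
      rw [LinearMap.sub_apply, Module.End.one_apply]
    rw [hsub] at happ
    have := congrFun happ i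
    rw [Pi.sub_apply] at this
    exact this.symm
  -- base case commutators
  have hWbase : ∀ g h : ↥G, ⁅g, h⁆ ∈ Wc 1 := by
    intro g h
    obtain ⟨d, a, hd, hgd⟩ := hstd (g : GL (Fin p) F) g.2
    obtain ⟨e, b, he, hhe⟩ := hstd (h : GL (Fin p) F) h.2
    have hcoe : ((⁅g, h⁆ : G) : GL (Fin p) F) = ⁅(g : GL (Fin p) F), (h : GL (Fin p) F)⁆ := by
      simp [commutatorElement_def]
    have hcm := stmt10comm_coe (g : GL (Fin p) F) (h : GL (Fin p) F) d e a b hd he hgd hhe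
    rw [← hcoe] at hcm
    set z : Fin p → F :=
      fun i => d i * (d (i - (b:Fin p)))⁻¹ * (e (i - (a:Fin p)) * (e i)⁻¹) with hzdef
    have hzp : ∀ i, z i ^ p = 1 := hdiagp _ (⁅g, h⁆ : G).2 z hcm
    set Pd : Fin p → F := fun i => ∏ t ∈ Finset.range b, d (i - (t : Fin p)) with hPddef
    set Pe : Fin p → F := fun i => ∏ t ∈ Finset.range a, e (i - (t : Fin p)) with hPedef
    have hPdne : ∀ i, Pd i ≠ 0 := fun i => Finset.prod_ne_zero_iff.mpr fun t _ => hd _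
    have hPene : ∀ i, Pe i ≠ 0 := fun i => Finset.prod_ne_zero_iff.mpr fun t _ => he _
    set w : Fin p → F := fun i => Pd i * (Pe i)⁻¹ with hwdef
    have hwne : ∀ i, w i ≠ 0 := fun i => mul_ne_zero (hPdne i) (inv_ne_zero (hPene i))
    have hzw : ∀ i, z i = w i * (w (i - 1))⁻¹ := by
      intro i
      have htd : Pd i * d (i - (b:Fin p)) = d i * Pd (i - 1) := stmt10telescope d b i
      have hte : Pe i * e (i - (a:Fin p)) = e i * Pe (i - 1) := stmt10telescope e a i
      have hdq : Pd i * (Pd (i-1))⁻¹ = d i * (d (i - (b:Fin p)))⁻¹ := by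
        have h1 : Pd (i-1) ≠ 0 := hPdne _
        have h2 : d (i - (b:Fin p)) ≠ 0 := hd _
        field_simp
        linear_combination htd
      have heq : e (i - (a:Fin p)) * (e i)⁻¹ = Pe (i-1) * (Pe i)⁻¹ := by
        have h1 : Pe i ≠ 0 := hPene _
        have h2 : e i ≠ 0 := he _
        field_simp
        linear_combination hte
      have hw2 : w i * (w (i - 1))⁻¹ = (Pd i * (Pd (i-1))⁻¹) * (Pe (i-1) * (Pe i)⁻¹) := by
        rw [hwdef]
        have h1 : Pd (i-1) ≠ 0 := hPdne _
        have h2 : Pe (i-1) ≠ 0 := hPene _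
        have h3 : Pd i ≠ 0 := hPdne _
        have h4 : Pe i ≠ 0 := hPene _
        field_simp
      rw [hw2, hdq, ← heq, hzdef]
    obtain ⟨x, hxz⟩ := stmt10key_log hζ z w hwne hzw hzp
    refine ⟨x, ?_⟩
    rw [hcm]
    refine congrArg Matrix.diagonal (funext fun i => ?_)
    rw [hxz i, pow_one, hLapp]
  -- main induction
  have hind : ∀ j : ℕ, lowerCentralSeries G (j + 1) ≤ (Wc (j + 1)).map G.subtype := by
    intro j
    induction j with
    | zero =>
        have hdef1 : lowerCentralSeries G (0+1) = ⁅G, G⁆ := rfl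
        rw [hdef1, Subgroup.commutator_le]
        intro g hg h hh
        exact ⟨⁅(⟨g, hg⟩ : G), ⟨h, hh⟩⁆, hWbase _ _, rfl⟩
    | succ j ih =>
        have hdef2 : lowerCentralSeries G (j+1+1) = ⁅lowerCentralSeries G (j+1), G⁆ := rfl
        rw [hdef2]
        refine le_trans (Subgroup.commutator_mono ih le_rfl) ?_
        rw [Subgroup.commutator_le]
        rintro _ ⟨g, hg, rfl⟩ h hh
        exact ⟨⁅g, ⟨h, hh⟩⁆, hWmem j g ⟨h, hh⟩ hg, rfl⟩
  -- conclusion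
  obtain ⟨m, hm⟩ := Nat.exists_eq_succ_of_ne_zero (NeZero.ne p)
  have hle : lowerCentralSeries G p ≤ (Wc p).map G.subtype := by
    have hm' : p = m + 1 := by omega
    have := hind m
    rwa [← hm'] at this
  rw [eq_bot_iff]
  intro g hg
  obtain ⟨g, ⟨x, hx⟩, rfl⟩ := hle hg
  have hLp : (L ^ p) x = 0 := stmt10L_pow_p x
  rw [hLp] at hx
  simp only [Pi.zero_apply, stmt10zf_zero] at hx
  rw [Subgroup.mem_bot]
  have h1 : ((g : GL (Fin p) F) : Matrix (Fin p) (Fin p) F) = 1 := by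
    rw [hx]; exact Matrix.diagonal_one
  have hg1 : (g : GL (Fin p) F) = 1 := Units.ext (by simpa using h1)
  exact hg1
end

section
/- Let p be a prime and G ⊆ GL_{p^k}(F) a finite irreducible monomial matrix group of exponent p, in which every element is of the form DP, where D is diagonal with p-th roots of unity on the diagonal and P is a permutation matrix of order dividing p. Then G has submultiplicative spectrum: σ(AB) ⊆ σ(A)·σ(B) for all A, B ∈ G. -/
open Pointwise

section Stmt12Aux

open Matrix

open Matrix

variable {F : Type*} [Field F] {n : Type*} [Fintype n] [DecidableEq n]

lemma algmap_mulVec (μ : F) (v : n → F) :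
    (algebraMap F (Matrix n n F) μ) *ᵥ v = μ • v := by
  rw [Matrix.algebraMap_eq_diagonal]
  ext i
  simp [Matrix.mulVec_diagonal]

lemma mem_spec_iff_eig {M : Matrix n n F} {μ : F} :
    μ ∈ spectrum F M ↔ ∃ v ≠ 0, M *ᵥ v = μ • v := by
  rw [spectrum.mem_iff, Matrix.isUnit_iff_isUnit_det, isUnit_iff_ne_zero, not_ne_iff,
    ← Matrix.exists_mulVec_eq_zero_iff]
  constructor
  · rintro ⟨v, hv, h⟩
    rw [Matrix.sub_mulVec, algmap_mulVec] at h
    exact ⟨v, hv, (sub_eq_zero.mp h).symm⟩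
  · rintro ⟨v, hv, h⟩
    refine ⟨v, hv, ?_⟩
    rw [Matrix.sub_mulVec, algmap_mulVec, h, sub_self]

lemma pow_mulVec_eig {M : Matrix n n F} {μ : F} {v : n → F} (h : M *ᵥ v = μ • v) (m : ℕ) :
    (M ^ m) *ᵥ v = μ ^ m • v := by
  induction m with
  | zero => simp [Matrix.one_mulVec]
  | succ m ih =>
    rw [pow_succ, ← Matrix.mulVec_mulVec, h, Matrix.mulVec_smul, ih, pow_succ]
    rw [mul_comm, mul_smul]

lemma spec_pow_eq_one {M : Matrix n n F} {μ : F} {p : ℕ} (hM : M ^ p = 1)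
    (h : μ ∈ spectrum F M) : μ ^ p = 1 := by
  obtain ⟨v, hv, hev⟩ := mem_spec_iff_eig.mp h
  have h2 := pow_mulVec_eig hev p
  rw [hM, Matrix.one_mulVec] at h2
  obtain ⟨i, hi⟩ := Function.ne_iff.mp hv
  have := congrFun h2 i
  simp only [Pi.smul_apply, smul_eq_mul] at this
  have hvi : v i ≠ 0 := by simpa using hi
  exact mul_right_cancel₀ hvi (by rw [← this, one_mul])

lemma perm_pow_fix {τ : Equiv.Perm n} {i : n} (h : τ i = i) (m : ℕ) : (τ ^ m) i = i := by
  induction m with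
  | zero => simp
  | succ m ih => rw [pow_succ, Equiv.Perm.mul_apply, h, ih]

lemma perm_zpow_fix {τ : Equiv.Perm n} {i : n} (h : τ i = i) (z : ℤ) : (τ ^ z) i = i := by
  cases z with
  | ofNat m => simpa using perm_pow_fix h m
  | negSucc m =>
    rw [zpow_negSucc]
    exact (Equiv.Perm.inv_eq_iff_eq).mpr (perm_pow_fix h (m + 1)).symm

lemma no_partial_fix {p : ℕ} (hp : p.Prime) {σ : Equiv.Perm n} {x : n} (hx : σ x ≠ x)
    (hσp : σ ^ p = 1) {t : ℕ} (ht0 : 0 < t) (htp : t < p) (ht : (σ ^ t) x = x) : False := by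
  have hco : Nat.Coprime p t := hp.coprime_iff_not_dvd.mpr (Nat.not_dvd_of_pos_of_lt ht0 htp)
  have hbez : (1 : ℤ) = p * Nat.gcdA p t + t * Nat.gcdB p t := by
    have := Nat.gcd_eq_gcd_ab p t
    rwa [hco] at this
  apply hx
  have h1 : σ = σ ^ (1 : ℤ) := by simp
  rw [h1, hbez, _root_.zpow_add, Equiv.Perm.mul_apply]
  have hpt : (σ ^ ((p : ℤ) * Nat.gcdA p t)) x = x := by
    rw [_root_.zpow_mul, zpow_natCast, hσp, _root_.one_zpow]
    rfl
  have htt : (σ ^ ((t : ℤ) * Nat.gcdB p t)) x = x := by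
    rw [_root_.zpow_mul, zpow_natCast]
    exact perm_zpow_fix ht _
  rw [htt, hpt]

lemma matrix_entry_form {d : n → F} {σ : Equiv.Perm n} (i j : n) :
    (Matrix.diagonal d * σ.permMatrix F) i j = if σ i = j then d i else 0 := by
  rw [Matrix.diagonal_mul, Equiv.Perm.permMatrix, PEquiv.toMatrix_apply, Equiv.toPEquiv_apply]
  by_cases h : σ i = j <;> simp [h, Option.mem_def]

lemma pow_entry_ne_zero {d : n → F} {σ : Equiv.Perm n} {M : Matrix n n F}
    (hM : M = Matrix.diagonal d * σ.permMatrix F) (m : ℕ) (i j : n)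
    (h : (M ^ m) i j ≠ 0) : (σ ^ m) i = j := by
  induction m generalizing j with
  | zero =>
    rw [pow_zero] at h
    simp only [pow_zero, Equiv.Perm.one_apply]
    by_contra hc
    exact h (Matrix.one_apply_ne hc)
  | succ m ih =>
    rw [pow_succ, Matrix.mul_apply] at h
    obtain ⟨l, hl⟩ := Finset.exists_ne_zero_of_sum_ne_zero h
    have h1 : (M ^ m) i l ≠ 0 := fun h0 => hl.2 (by rw [h0, zero_mul])
    have h2 : M l j ≠ 0 := fun h0 => hl.2 (by rw [h0, mul_zero])
    have hil := ih l h1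
    rw [hM, matrix_entry_form] at h2
    have : σ l = j := by by_contra hc; simp [hc] at h2
    rw [pow_succ', Equiv.Perm.mul_apply, hil, this]

lemma full_spectrum {p : ℕ} (hp : p.Prime) {M : Matrix n n F} {d : n → F} {σ : Equiv.Perm n}
    (hd : ∀ i, d i ≠ 0) (hσ1 : σ ≠ 1) (hσp : σ ^ p = 1)
    (hM : M = Matrix.diagonal d * σ.permMatrix F) (hMp : M ^ p = 1)
    {ω : F} (hω : ω ^ p = 1) : ω ∈ spectrum F M := by
  have hω0 : ω ≠ 0 := fun h => by simp [h, zero_pow hp.ne_zero] at hω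
  have hωinv : ω⁻¹ ^ p = 1 := by rw [inv_pow, hω, inv_one]
  -- the "projection"
  set h : ℕ → Matrix n n F := fun m => ω • (ω⁻¹ ^ m • M ^ m) with hh
  set S : Matrix n n F := ∑ m ∈ Finset.range p, ω⁻¹ ^ m • M ^ m with hS
  have hterm : ∀ m, M * (ω⁻¹ ^ m • M ^ m) = h (m + 1) := by
    intro m
    simp only [hh]
    rw [Matrix.mul_smul, ← pow_succ', smul_smul]
    congr 1
    rw [pow_succ, ← mul_assoc, mul_comm ω (ω⁻¹ ^ m), mul_assoc, mul_inv_cancel₀ hω0, mul_one]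
  have hp0 : h p = h 0 := by
    simp only [hh]
    rw [hωinv, hMp]
    simp
  have key : ∑ m ∈ Finset.range p, h (m + 1) = ∑ m ∈ Finset.range p, h m := by
    have e1 := Finset.sum_range_succ' h p
    have e2 := Finset.sum_range_succ h p
    rw [e2, ← hp0] at e1
    exact (add_right_cancel e1.symm)
  have h1 : M * S = ω • S := by
    rw [hS, Finset.mul_sum, Finset.smul_sum]
    simp only [hterm]
    exact key
  obtain ⟨i0, hi0⟩ : ∃ i, σ i ≠ i := by
    by_contra hc
    push_neg at hc
    exact hσ1 (Equiv.ext fun i => (hc i).trans rfl)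
  have hωm : ∀ m : ℕ, ω⁻¹ ^ m ≠ 0 := fun m => pow_ne_zero m (inv_ne_zero hω0)
  have hSentry : S i0 (σ i0) = ω⁻¹ * d i0 := by
    rw [hS, Matrix.sum_apply]
    rw [Finset.sum_eq_single 1]
    · rw [Matrix.smul_apply, pow_one, pow_one, hM, matrix_entry_form]
      simp
    · intro m hm hm1
      rw [Matrix.smul_apply]
      by_contra hne
      have hMm : (M ^ m) i0 (σ i0) ≠ 0 := by
        intro h0
        exact hne (by rw [h0, smul_zero])
      have hiter := pow_entry_ne_zero hM m i0 (σ i0) hMm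
      rcases Nat.eq_zero_or_pos m with h0 | h0
      · subst h0
        simp only [pow_zero, Equiv.Perm.one_apply] at hiter
        exact hi0 hiter.symm
      · have hm2 : 2 ≤ m := by omega
        have hdecomp : (σ ^ (m - 1)) (σ i0) = σ i0 := by
          have : σ ^ m = σ ^ (m - 1) * σ := by
            rw [← pow_succ]
            congr 1
            omega
          rw [this, Equiv.Perm.mul_apply] at hiter
          exact hiter
        have hx2 : σ (σ i0) ≠ σ i0 := fun hcc => hi0 (σ.injective hcc)
        exact no_partial_fix hp hx2 hσp (by omega) (by
          have := Finset.mem_range.mp hm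
          omega) hdecomp
    · intro hnot
      exact absurd (Finset.mem_range.mpr hp.one_lt) hnot
  set v : n → F := fun i => S i (σ i0) with hv
  have hv0 : v ≠ 0 := by
    intro hz
    have : v i0 = 0 := by rw [hz]; rfl
    rw [hv] at this
    simp only [] at this
    rw [hSentry] at this
    exact hd i0 (by
      rcases mul_eq_zero.mp this with h | h
      · exact absurd h (inv_ne_zero hω0)
      · exact h)
  apply mem_spec_iff_eig.mpr ⟨v, hv0, ?_⟩
  funext i
  have : (M *ᵥ v) i = (M * S) i (σ i0) := by
    simp [Matrix.mulVec, dotProduct, Matrix.mul_apply, hv]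
  rw [this, h1, Matrix.smul_apply]
  rfl


end Stmt12Aux

/-- Let `p` be a prime and `G ⊆ GL_{p^k}(F)` a finite irreducible monomial
matrix group of exponent `p`, in which every element has the form `D·P` with `D`
diagonal with `p`-th roots of unity on the diagonal and `P` a permutation matrix of
order dividing `p`.  Then `G` has submultiplicative spectrum. -/
theorem stmt12 {F : Type*} [Field F] [IsAlgClosed F] [CharZero F]
    (p k : ℕ) (hp : p.Prime)
    (G : Subgroup (GL (Fin (p ^ k)) F)) (hfin : Finite G)
    (hexp : ∀ g ∈ G, g ^ p = 1)
    (hform : ∀ g ∈ G, ∃ (d : Fin (p ^ k) → F) (σ : Equiv.Perm (Fin (p ^ k))),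
      (∀ i, d i ^ p = 1) ∧ σ ^ p = 1 ∧
      (g : Matrix (Fin (p ^ k)) (Fin (p ^ k)) F) = Matrix.diagonal d * σ.permMatrix F)
    (hirr : ∀ W : Submodule F (Fin (p ^ k) → F),
      (∀ g ∈ G, W.map (Matrix.mulVecLin (g : Matrix (Fin (p ^ k)) (Fin (p ^ k)) F)) ≤ W) →
      W = ⊥ ∨ W = ⊤) :
    ∀ A B : GL (Fin (p ^ k)) F, A ∈ G → B ∈ G →
      spectrum F ((A * B : GL (Fin (p ^ k)) F) : Matrix (Fin (p ^ k)) (Fin (p ^ k)) F) ⊆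
        spectrum F (A : Matrix (Fin (p ^ k)) (Fin (p ^ k)) F) *
          spectrum F (B : Matrix (Fin (p ^ k)) (Fin (p ^ k)) F) := by
  intro A B hA hB μ hμ
  haveI : Nonempty (Fin (p ^ k)) := ⟨⟨0, pow_pos hp.pos k⟩⟩
  have hpowval : ∀ g : GL (Fin (p ^ k)) F, g ∈ G →
      ((g : Matrix (Fin (p ^ k)) (Fin (p ^ k)) F)) ^ p = 1 := by
    intro g hg
    have := hexp g hg
    calc ((g : Matrix (Fin (p ^ k)) (Fin (p ^ k)) F)) ^ p = ((g ^ p : GL (Fin (p ^ k)) F) :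
        Matrix (Fin (p ^ k)) (Fin (p ^ k)) F) := by rw [Units.val_pow_eq_pow_val]
      _ = 1 := by rw [this, Units.val_one]
  have hABval : ((A * B : GL (Fin (p ^ k)) F) : Matrix (Fin (p ^ k)) (Fin (p ^ k)) F) =
      (A : Matrix (Fin (p ^ k)) (Fin (p ^ k)) F) * (B : Matrix (Fin (p ^ k)) (Fin (p ^ k)) F) :=
    Units.val_mul A B
  have hμp : μ ^ p = 1 := spec_pow_eq_one (hpowval (A * B) (mul_mem hA hB)) hμ
  have hμ0 : μ ≠ 0 := fun h => by simp [h, zero_pow hp.ne_zero] at hμp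
  obtain ⟨dA, σA, hdA, hσAp, hAeq⟩ := hform A hA
  obtain ⟨dB, σB, hdB, hσBp, hBeq⟩ := hform B hB
  have hdA0 : ∀ i, dA i ≠ 0 := fun i h => by simpa [h, zero_pow hp.ne_zero] using hdA i
  have hdB0 : ∀ i, dB i ≠ 0 := fun i h => by simpa [h, zero_pow hp.ne_zero] using hdB i
  by_cases hσA1 : σA = 1
  · by_cases hσB1 : σB = 1
    · -- both diagonal
      subst hσA1 hσB1
      have hP1 : ((1 : Equiv.Perm (Fin (p ^ k))).permMatrix F) = 1 := by
        rw [Equiv.Perm.permMatrix, show (1 : Equiv.Perm (Fin (p ^ k))) = Equiv.refl _ from rfl,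
          Equiv.toPEquiv_refl, PEquiv.toMatrix_refl]
      rw [hP1, mul_one] at hAeq hBeq
      rw [hABval, hAeq, hBeq, Matrix.diagonal_mul_diagonal, spectrum_diagonal] at hμ
      obtain ⟨i, hi⟩ := hμ
      rw [hAeq, hBeq, spectrum_diagonal, spectrum_diagonal]
      exact ⟨dA i, ⟨i, rfl⟩, dB i, ⟨i, rfl⟩, hi⟩
    · -- B non-diagonal
      obtain ⟨α, hα⟩ := spectrum.nonempty_of_isAlgClosed_of_finiteDimensional F
        (A : Matrix (Fin (p ^ k)) (Fin (p ^ k)) F)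
      have hαp : α ^ p = 1 := spec_pow_eq_one (hpowval A hA) hα
      have hα0 : α ≠ 0 := fun h => by simp [h, zero_pow hp.ne_zero] at hαp
      have hβ : (α⁻¹ * μ) ^ p = 1 := by
        rw [mul_pow, inv_pow, hαp, hμp, inv_one, one_mul]
      have hβmem : α⁻¹ * μ ∈ spectrum F (B : Matrix (Fin (p ^ k)) (Fin (p ^ k)) F) :=
        full_spectrum hp hdB0 hσB1 hσBp hBeq (hpowval B hB) hβ
      exact ⟨α, hα, α⁻¹ * μ, hβmem, by field_simp⟩
  · -- A non-diagonal
    obtain ⟨β, hβ⟩ := spectrum.nonempty_of_isAlgClosed_of_finiteDimensional F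
      (B : Matrix (Fin (p ^ k)) (Fin (p ^ k)) F)
    have hβp : β ^ p = 1 := spec_pow_eq_one (hpowval B hB) hβ
    have hβ0 : β ≠ 0 := fun h => by simp [h, zero_pow hp.ne_zero] at hβp
    have hαp : (μ * β⁻¹) ^ p = 1 := by
      rw [mul_pow, inv_pow, hβp, hμp, inv_one, mul_one]
    have hαmem : μ * β⁻¹ ∈ spectrum F (A : Matrix (Fin (p ^ k)) (Fin (p ^ k)) F) :=
      full_spectrum hp hdA0 hσA1 hσAp hAeq (hpowval A hA) hαp
    exact ⟨μ * β⁻¹, hαmem, β, hβ, by field_simp⟩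
end

section
/- Every finite group of exponent p (p prime) has property Ŝ: every representation of every subgroup over an algebraically closed field of characteristic 0 has submultiplicative spectrum. -/
set_option linter.unusedSectionVars false
set_option maxHeartbeats 1000000

open Pointwise

section helpers

variable {F : Type*} [Field F]
variable {V : Type*} [AddCommGroup V] [Module F V] [FiniteDimensional F V]

lemma mem_spectrum_of_eigen {f : Module.End F V} {μ : F} {v : V} (hv : v ≠ 0)
    (h : f v = μ • v) : μ ∈ spectrum F f := by
  rw [spectrum.mem_iff]
  intro hu
  have hinj := ((Module.End.isUnit_iff _).mp hu).injective
  have h0 : (algebraMap F (Module.End F V) μ - f) v = 0 := by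
    simp [Module.algebraMap_end_apply, h]
  exact hv (hinj (by simpa using h0))

lemma eigen_of_mem_spectrum {f : Module.End F V} {μ : F} (h : μ ∈ spectrum F f) :
    ∃ v : V, v ≠ 0 ∧ f v = μ • v := by
  rw [spectrum.mem_iff] at h
  have hbij : ¬ Function.Bijective (algebraMap F (Module.End F V) μ - f) := fun hb =>
    h ((Module.End.isUnit_iff _).mpr hb)
  have hinj : ¬ Function.Injective (algebraMap F (Module.End F V) μ - f) := fun hi =>
    hbij ⟨hi, LinearMap.injective_iff_surjective.mp hi⟩
  rw [← LinearMap.ker_eq_bot] at hinj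
  obtain ⟨v, hvmem, hv0⟩ := Submodule.exists_mem_ne_zero_of_ne_bot hinj
  refine ⟨v, hv0, ?_⟩
  have h2 := (LinearMap.mem_ker).mp hvmem
  simp only [LinearMap.sub_apply, Module.algebraMap_end_apply] at h2
  exact (sub_eq_zero.mp h2).symm

lemma end_nontrivial [Nontrivial V] : Nontrivial (Module.End F V) := by
  obtain ⟨v, hv⟩ := exists_ne (0 : V)
  exact ⟨1, 0, fun h => hv (by simpa using congrFun (congrArg DFunLike.coe h) v)⟩

lemma pow_apply_eigen {f : Module.End F V} {μ : F} {v : V} (h : f v = μ • v) (k : ℕ) :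
    (f ^ k) v = μ ^ k • v := by
  induction k with
  | zero => simp
  | succ k ih =>
      rw [pow_succ, Module.End.mul_apply, h, map_smul, ih, smul_smul, pow_succ, mul_comm]

lemma eigen_pow_one {f : Module.End F V} {p : ℕ} (hf : f ^ p = 1) {μ : F} {v : V}
    (hv : v ≠ 0) (h : f v = μ • v) : μ ^ p = 1 := by
  have h1 : (f ^ p) v = μ ^ p • v := pow_apply_eigen h p
  rw [hf] at h1
  have : (μ ^ p - 1) • v = 0 := by rw [sub_smul, one_smul, ← h1]; simp
  rcases smul_eq_zero.mp this with h' | h'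
  · exact sub_eq_zero.mp h'
  · exact absurd h' hv

lemma spectrum_smul_one [Nontrivial V] (c : F) :
    spectrum F (c • (1 : Module.End F V)) = {c} := by
  haveI := end_nontrivial (F := F) (V := V)
  ext μ
  simp only [spectrum.mem_iff, Set.mem_singleton_iff, Algebra.algebraMap_eq_smul_one]
  rw [← sub_smul]
  constructor
  · intro h
    by_contra hne
    exact h (IsUnit.smul (Units.mk0 (μ - c) (sub_ne_zero.mpr hne)) isUnit_one)
  · rintro rfl
    simp only [sub_self, zero_smul]
    exact not_isUnit_zero



/-- If `M` normalizes `x` with a nontrivial root-of-unity multiplier `c`, then every `p`-th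
root of unity is an eigenvalue of `M`. -/
lemma full_spectrum_s13 [IsAlgClosed F] [Nontrivial V] {p : ℕ} (hp : p.Prime)
    (M : (Module.End F V)ˣ) (hMp : (M : Module.End F V) ^ p = 1)
    (x : Module.End F V) (hxp : x ^ p = 1)
    {c : F} (hc1 : c ≠ 1) (hcp : c ^ p = 1)
    (hMx : (M : Module.End F V) * x = c • (x * (M : Module.End F V))) :
    ∀ ω : F, ω ^ p = 1 → ∃ v : V, v ≠ 0 ∧ (M : Module.End F V) v = ω • v := by
  haveI : Fact p.Prime := ⟨hp⟩
  have hc0 : c ≠ 0 := by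
    rintro rfl
    rw [zero_pow hp.ne_zero] at hcp
    exact zero_ne_one hcp
  have horder : orderOf c = p := orderOf_eq_prime hcp hc1
  have hxM : x * (M : Module.End F V) = c⁻¹ • ((M : Module.End F V) * x) := by
    rw [hMx, smul_smul, inv_mul_cancel₀ hc0, one_smul]
  -- eigenvalue of x
  obtain ⟨μ₀, hμ₀⟩ := Module.End.exists_eigenvalue x
  obtain ⟨v₀, hv₀⟩ := hμ₀.exists_hasEigenvector
  have hv₀0 : v₀ ≠ 0 := hv₀.right
  have hxv₀ : x v₀ = μ₀ • v₀ := hv₀.apply_eq_smul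
  have hμ₀p : μ₀ ^ p = 1 := eigen_pow_one hxp hv₀0 hxv₀
  have hμ₀0 : μ₀ ≠ 0 := fun h => by rw [h, zero_pow hp.ne_zero] at hμ₀p; exact zero_ne_one hμ₀p
  -- the orbit vectors
  set Me : Module.End F V := (M : Module.End F V) with hMe
  let v : ℕ → V := fun j => (Me ^ j) v₀
  have hv0 : ∀ j, v j ≠ 0 := by
    intro j h
    have hinj := ((Module.End.isUnit_iff ((M ^ j : (Module.End F V)ˣ) : Module.End F V)).mp
      (M ^ j).isUnit).injective
    rw [Units.val_pow_eq_pow_val] at hinj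
    exact hv₀0 (hinj (by simpa [v] using h))
  have hvsucc : ∀ j, v (j + 1) = Me (v j) := by
    intro j
    show (Me ^ (j + 1)) v₀ = Me ((Me ^ j) v₀)
    rw [pow_succ', Module.End.mul_apply]
  have heig : ∀ j, x (v j) = ((c⁻¹) ^ j * μ₀) • v j := by
    intro j
    induction j with
    | zero => simpa [v] using hxv₀
    | succ j ih =>
        rw [hvsucc j, ← Module.End.mul_apply, hxM, LinearMap.smul_apply, Module.End.mul_apply,
          ih, map_smul, smul_smul]
        congr 1
        ring
  have hvp : v p = v 0 := by
    show (Me ^ p) v₀ = (Me ^ 0) v₀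
    rw [hMp, pow_zero]
  -- linear independence of v 0, ..., v (p-1)
  have hμinj : Function.Injective (fun j : Fin p => (c⁻¹) ^ (j : ℕ) * μ₀) := by
    intro i j hij
    have h1 := mul_right_cancel₀ hμ₀0 hij
    rw [inv_pow, inv_pow] at h1
    have h3 : c ^ (i : ℕ) = c ^ (j : ℕ) := inv_injective h1
    have h2 := pow_injOn_Iio_orderOf (x := c)
      (by rw [horder]; exact Set.mem_Iio.mpr i.isLt) (by rw [horder]; exact Set.mem_Iio.mpr j.isLt) h3
    exact Fin.ext h2
  have hli : LinearIndependent F (fun j : Fin p => v (j : ℕ)) := by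
    apply Module.End.eigenvectors_linearIndependent' x (fun j : Fin p => (c⁻¹) ^ (j : ℕ) * μ₀)
      hμinj
    intro j
    exact ⟨Module.End.mem_eigenspace_iff.mpr (heig j), hv0 j⟩
  -- the cyclic eigenvector
  intro ω hω
  have hω0 : ω ≠ 0 := fun h => by rw [h, zero_pow hp.ne_zero] at hω; exact zero_ne_one hω
  set f : ℕ → V := fun j => (ω⁻¹) ^ j • v j with hf
  refine ⟨∑ j ∈ Finset.range p, f j, ?_, ?_⟩
  · intro hzero
    have hsum : ∑ j : Fin p, ((ω⁻¹) ^ (j : ℕ)) • v (j : ℕ) = 0 := by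
      rw [← Finset.sum_range (fun j => (ω⁻¹) ^ j • v j)]
      exact hzero
    have := Fintype.linearIndependent_iff.mp hli (fun j : Fin p => (ω⁻¹) ^ (j : ℕ)) hsum
      ⟨0, hp.pos⟩
    simp at this
  · -- M w = ω • w
    have hterm : ∀ j, Me (f j) = ω • f (j + 1) := by
      intro j
      rw [hf]
      simp only [map_smul, ← hvsucc j, smul_smul]
      congr 1
      rw [pow_succ, mul_comm (ω⁻¹ ^ j), ← mul_assoc, mul_inv_cancel₀ hω0, one_mul]
    have hfp : f p = f 0 := by
      rw [hf]
      simp only [hvp, pow_zero, one_smul]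
      rw [inv_pow, hω, inv_one, one_smul]
    have hshift : ∑ j ∈ Finset.range p, f (j + 1) = ∑ j ∈ Finset.range p, f j := by
      have h1 := Finset.sum_range_succ' f p
      have h2 := Finset.sum_range_succ f p
      rw [h2, hfp] at h1
      exact add_right_cancel h1.symm
    rw [map_sum]
    calc ∑ j ∈ Finset.range p, Me (f j) = ∑ j ∈ Finset.range p, ω • f (j + 1) := by
          exact Finset.sum_congr rfl fun j _ => hterm j
      _ = ω • ∑ j ∈ Finset.range p, f (j + 1) := by rw [Finset.smul_sum]
      _ = ω • ∑ j ∈ Finset.range p, f j := by rw [hshift]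


end helpers

universe u v

lemma key_lemma {F : Type u} [Field F] [IsAlgClosed F] {p : ℕ} (hp : p.Prime) (n : ℕ) :
    ∀ (V : Type v) [AddCommGroup V] [Module F V] [FiniteDimensional F V],
      Module.finrank F V ≤ n →
      ∀ G : Subgroup (Module.End F V)ˣ, Finite G →
        (∀ g ∈ G, g ^ p = 1) →
        ∀ M N : (Module.End F V)ˣ, M ∈ G → N ∈ G →
          spectrum F ((↑(M * N) : Module.End F V)) ⊆
            spectrum F ((M : Module.End F V)) * spectrum F ((N : Module.End F V)) := by
  induction n with
  | zero =>
      intro V _ _ _ hn G _ _ M N _ _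
      haveI : Subsingleton V := Module.finrank_zero_iff.mp (Nat.le_zero.mp hn)
      intro μ hμ
      rw [spectrum.mem_iff] at hμ
      exact absurd (by
        rw [Subsingleton.elim ((algebraMap F (Module.End F V)) μ - (↑(M * N) : Module.End F V))
          (1 : Module.End F V)]
        exact isUnit_one) hμ
  | succ n ih =>
      intro V _ _ _ hn G hGfin hexp M N hM hN
      haveI := hGfin
      by_cases hV : Subsingleton V
      · intro μ hμ
        rw [spectrum.mem_iff] at hμ
        exact absurd (by
          rw [Subsingleton.elim ((algebraMap F (Module.End F V)) μ - (↑(M * N) : Module.End F V))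
            (1 : Module.End F V)]
          exact isUnit_one) hμ
      haveI : Nontrivial V := not_subsingleton_iff_nontrivial.mp hV
      haveI := end_nontrivial (F := F) (V := V)
      by_cases hscal : ∀ g : (Module.End F V)ˣ, g ∈ G → ∃ c : F, (g : Module.End F V) = c • 1
      · obtain ⟨a, ha⟩ := hscal M hM
        obtain ⟨b, hb⟩ := hscal N hN
        have hMN : (↑(M * N) : Module.End F V) = (a * b) • 1 := by
          rw [Units.val_mul, ha, hb, smul_mul_assoc, one_mul, smul_smul]
        rw [hMN, ha, hb, spectrum_smul_one, spectrum_smul_one, spectrum_smul_one]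
        intro μ hμ
        rw [Set.mem_singleton_iff] at hμ
        subst hμ
        exact Set.mul_mem_mul rfl rfl
      · push_neg at hscal
        obtain ⟨g₀, hg₀G, hg₀⟩ := hscal
        -- the subgroup of scalar elements
        let S : Subgroup ↥G :=
          { carrier := {g : ↥G | ∃ c : F, ((g : (Module.End F V)ˣ) : Module.End F V) = c • 1}
            one_mem' := ⟨1, by simp⟩
            mul_mem' := by
              rintro a b ⟨ca, hca⟩ ⟨cb, hcb⟩
              refine ⟨ca * cb, ?_⟩
              show ((↑(a * b) : (Module.End F V)ˣ) : Module.End F V) = (ca * cb) • 1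
              rw [MulMemClass.coe_mul, Units.val_mul, hca, hcb, smul_mul_assoc, one_mul, smul_smul]
            inv_mem' := by
              rintro a ⟨c, hc⟩
              have hc0 : c ≠ 0 := by
                rintro rfl
                rw [zero_smul] at hc
                exact not_isUnit_zero (hc ▸ (a : (Module.End F V)ˣ).isUnit)
              refine ⟨c⁻¹, ?_⟩
              show ((↑(a⁻¹) : (Module.End F V)ˣ) : Module.End F V) = c⁻¹ • 1
              rw [InvMemClass.coe_inv]
              refine Units.inv_eq_of_mul_eq_one_right ?_
              rw [hc, smul_mul_assoc, one_mul, smul_smul, mul_inv_cancel₀ hc0, one_smul] }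
        haveI hSnormal : S.Normal := by
          constructor
          rintro s ⟨c, hc⟩ g
          refine ⟨c, ?_⟩
          show ((↑(g * s * g⁻¹) : (Module.End F V)ˣ) : Module.End F V) = c • 1
          rw [MulMemClass.coe_mul, MulMemClass.coe_mul, InvMemClass.coe_inv, Units.val_mul,
            Units.val_mul, hc, mul_smul_comm, mul_one, smul_mul_assoc, Units.mul_inv]
        haveI : Finite (↥G ⧸ S) := Quotient.finite _
        have hpG' : ∀ g : ↥G, g ^ p = 1 := fun g =>
          Subtype.ext (by rw [SubmonoidClass.coe_pow, OneMemClass.coe_one]; exact hexp _ g.2)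
        have hpGg : IsPGroup p ↥G := fun g => ⟨1, by rw [pow_one, hpG' g]⟩
        have hpQ : IsPGroup p (↥G ⧸ S) := hpGg.to_quotient S
        haveI : Nontrivial (↥G ⧸ S) := by
          refine nontrivial_of_ne ((⟨g₀, hg₀G⟩ : ↥G) : ↥G ⧸ S) 1 ?_
          rw [Ne, QuotientGroup.eq_one_iff]
          rintro ⟨c, hc⟩
          exact hg₀ c hc
        haveI := Fact.mk hp
        haveI := hpQ.center_nontrivial
        obtain ⟨z, hz1⟩ := exists_ne (1 : ↥(Subgroup.center (↥G ⧸ S)))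
        have hzQ1 : (z : ↥G ⧸ S) ≠ 1 := fun h =>
          hz1 (Subtype.ext (h.trans (OneMemClass.coe_one _).symm))
        obtain ⟨xg, hxg⟩ := QuotientGroup.mk'_surjective S (z : ↥G ⧸ S)
        set xu : (Module.End F V)ˣ := ((xg : ↥G) : (Module.End F V)ˣ) with hxu
        set x : Module.End F V := (xu : Module.End F V) with hxdef
        have hxG : xu ∈ G := xg.2
        have hxp : x ^ p = 1 := by
          rw [hxdef, ← Units.val_pow_eq_pow_val, hexp xu hxG, Units.val_one]
        have hx0 : x ≠ 0 := by
          intro h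
          have h1 : IsUnit x := xu.isUnit
          rw [h] at h1
          exact not_isUnit_zero h1
        have hxns : ¬ ∃ c : F, x = c • 1 := by
          rintro ⟨c, hc⟩
          apply hzQ1
          rw [← hxg, QuotientGroup.mk'_apply]
          exact (QuotientGroup.eq_one_iff xg).mpr ⟨c, hc⟩
        have hconj : ∀ g : (Module.End F V)ˣ, g ∈ G →
            ∃ c : F, (g : Module.End F V) * x = c • (x * (g : Module.End F V)) := by
          intro g hg
          have hzc := Subgroup.mem_center_iff.mp z.2
          have hsS : (⟨g, hg⟩ : ↥G) * xg * (⟨g, hg⟩ : ↥G)⁻¹ * xg⁻¹ ∈ S := by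
            rw [← QuotientGroup.eq_one_iff]
            have h1 : ((↑((⟨g, hg⟩ : ↥G) * xg * (⟨g, hg⟩ : ↥G)⁻¹ * xg⁻¹) : ↥G ⧸ S))
                = ((⟨g, hg⟩ : ↥G) : ↥G ⧸ S) * ((xg : ↥G) : ↥G ⧸ S) *
                  (((⟨g, hg⟩ : ↥G) : ↥G ⧸ S))⁻¹ * (((xg : ↥G) : ↥G ⧸ S))⁻¹ := by
              simp [QuotientGroup.mk_mul, QuotientGroup.mk_inv]
            rw [h1]
            have hx' : ((xg : ↥G) : ↥G ⧸ S) = (z : ↥G ⧸ S) := by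
              rw [← hxg, QuotientGroup.mk'_apply]
            rw [hx', hzc (((⟨g, hg⟩ : ↥G) : ↥G ⧸ S))]
            group
          obtain ⟨c, hc⟩ := hsS
          refine ⟨c, ?_⟩
          have hcu : ((g * xu * g⁻¹ * xu⁻¹ : (Module.End F V)ˣ) : Module.End F V) = c • 1 := by
            have : ((↑((⟨g, hg⟩ : ↥G) * xg * (⟨g, hg⟩ : ↥G)⁻¹ * xg⁻¹) : (Module.End F V)ˣ)
                : Module.End F V) = ((g * xu * g⁻¹ * xu⁻¹ : (Module.End F V)ˣ)
                : Module.End F V) := by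
              simp [MulMemClass.coe_mul, InvMemClass.coe_inv, hxu]
            rw [← this]
            exact hc
          have h2 : (g : Module.End F V) * x * ((g⁻¹ : (Module.End F V)ˣ) : Module.End F V)
              = c • x := by
            have h3 := congrArg (· * x) hcu
            calc (g : Module.End F V) * x * ((g⁻¹ : (Module.End F V)ˣ) : Module.End F V)
                = ((g * xu * g⁻¹ * xu⁻¹ : (Module.End F V)ˣ) : Module.End F V) * x := by
                  simp only [Units.val_mul, mul_assoc]
                  rw [Units.inv_mul, mul_one]
              _ = (c • 1) * x := by rw [hcu]
              _ = c • x := by rw [smul_mul_assoc, one_mul]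
          have h4 := congrArg (· * (g : Module.End F V)) h2
          calc (g : Module.End F V) * x
              = (g : Module.End F V) * x *
                (((g⁻¹ : (Module.End F V)ˣ) : Module.End F V) * (g : Module.End F V)) := by
                rw [Units.inv_mul, mul_one]
            _ = c • x * (g : Module.End F V) := by rw [← mul_assoc, h4]
            _ = c • (x * (g : Module.End F V)) := by rw [smul_mul_assoc]
        obtain ⟨cM, hgxM⟩ := hconj M hM
        obtain ⟨cN, hgxN⟩ := hconj N hN
        -- the multipliers are p-th roots of unity
        have hcpow : ∀ g : (Module.End F V)ˣ, g ∈ G → ∀ c : F,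
            (g : Module.End F V) * x = c • (x * (g : Module.End F V)) → c ^ p = 1 := by
          intro g hg c hgx
          have hiter : ∀ j : ℕ, (g : Module.End F V) ^ j * x
              = c ^ j • (x * (g : Module.End F V) ^ j) := by
            intro j
            induction j with
            | zero => simp
            | succ j ihj =>
                calc (g : Module.End F V) ^ (j+1) * x
                    = (g : Module.End F V) ^ j * ((g : Module.End F V) * x) := by
                      rw [pow_succ, mul_assoc]
                  _ = (g : Module.End F V) ^ j * (c • (x * (g : Module.End F V))) := by rw [hgx]
                  _ = c • ((g : Module.End F V) ^ j * x * (g : Module.End F V)) := by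
                      rw [mul_smul_comm, mul_assoc]
                  _ = c • ((c ^ j • (x * (g : Module.End F V) ^ j)) * (g : Module.End F V)) := by
                      rw [ihj]
                  _ = c ^ (j+1) • (x * (g : Module.End F V) ^ (j+1)) := by
                      rw [smul_mul_assoc, smul_smul, mul_assoc x, ← pow_succ, ← pow_succ']
          have hgp : (g : Module.End F V) ^ p = 1 := by
            rw [← Units.val_pow_eq_pow_val, hexp g hg, Units.val_one]
          have h5 := hiter p
          rw [hgp, one_mul, mul_one] at h5
          have h6 : (c ^ p - 1) • x = 0 := by rw [sub_smul, one_smul, ← h5, sub_self]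
          rcases smul_eq_zero.mp h6 with h' | h'
          · exact sub_eq_zero.mp h'
          · exact absurd h' hx0
        have hcMp : cM ^ p = 1 := hcpow M hM cM hgxM
        have hcNp : cN ^ p = 1 := hcpow N hN cN hgxN
        have hMp : (M : Module.End F V) ^ p = 1 := by
          rw [← Units.val_pow_eq_pow_val, hexp M hM, Units.val_one]
        have hNp : (N : Module.End F V) ^ p = 1 := by
          rw [← Units.val_pow_eq_pow_val, hexp N hN, Units.val_one]
        have hMNp : (↑(M * N) : Module.End F V) ^ p = 1 := by
          rw [← Units.val_pow_eq_pow_val, hexp _ (mul_mem hM hN), Units.val_one]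
        by_cases hcM1 : cM = 1
        · by_cases hcN1 : cN = 1
          · -- both commute with x : restriction to an eigenspace of x
            rw [hcM1, one_smul] at hgxM
            rw [hcN1, one_smul] at hgxN
            intro μ hμ
            obtain ⟨u, hu0, huMN⟩ := eigen_of_mem_spectrum hμ
            set MNe : Module.End F V := (↑(M * N) : Module.End F V) with hMNe
            set U : Submodule F V := LinearMap.ker (MNe - μ • 1) with hU
            have huU : u ∈ U := by
              rw [hU, LinearMap.mem_ker, LinearMap.sub_apply, LinearMap.smul_apply,
                Module.End.one_apply, huMN, sub_self]
            have hxMN : x * MNe = MNe * x := by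
              rw [hMNe, Units.val_mul, ← mul_assoc, ← hgxM, mul_assoc, ← hgxN, ← mul_assoc]
            have hUx : ∀ w ∈ U, x w ∈ U := by
              intro w hw
              rw [hU, LinearMap.mem_ker, LinearMap.sub_apply, LinearMap.smul_apply,
                Module.End.one_apply] at hw ⊢
              have hw' : MNe w = μ • w := by
                have := sub_eq_zero.mp hw; simpa using this
              have hcm : MNe (x w) = x (MNe w) := by
                rw [← Module.End.mul_apply, ← Module.End.mul_apply, hxMN]
              rw [hcm, hw', map_smul, sub_self]
            haveI : Nontrivial ↥U :=
              nontrivial_of_ne ⟨u, huU⟩ 0 (fun h => hu0 (by simpa [Subtype.ext_iff] using h))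
            obtain ⟨ν, hν⟩ := Module.End.exists_eigenvalue (LinearMap.restrict x hUx)
            obtain ⟨w', hw'⟩ := hν.exists_hasEigenvector
            have hw'0 : ((w' : ↥U) : V) ≠ 0 := fun h => hw'.right (Subtype.ext h)
            have hxw : x ((w' : ↥U) : V) = ν • ((w' : ↥U) : V) := by
              have h := congrArg Subtype.val hw'.apply_eq_smul
              simpa [LinearMap.restrict_apply] using h
            have hUmem : ∀ y : V, y ∈ U → MNe y = μ • y := by
              intro y hy
              rw [hU, LinearMap.mem_ker, LinearMap.sub_apply, LinearMap.smul_apply,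
                Module.End.one_apply] at hy
              have := sub_eq_zero.mp hy; simpa using this
            have hMNw : MNe ((w' : ↥U) : V) = μ • ((w' : ↥U) : V) := hUmem _ (w' : ↥U).2
            set E : Submodule F V := LinearMap.ker (x - ν • 1) with hE
            have hwE : ((w' : ↥U) : V) ∈ E := by
              rw [hE, LinearMap.mem_ker, LinearMap.sub_apply, LinearMap.smul_apply,
                Module.End.one_apply, hxw, sub_self]
            have hEne : E ≠ ⊤ := by
              intro hEtop
              refine hxns ⟨ν, ?_⟩
              ext w
              have hw : w ∈ E := hEtop ▸ Submodule.mem_top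
              rw [hE, LinearMap.mem_ker, LinearMap.sub_apply, LinearMap.smul_apply,
                Module.End.one_apply] at hw
              simpa using sub_eq_zero.mp hw
            have hEfr : Module.finrank F ↥E ≤ n := by
              have h1 := Submodule.finrank_lt hEne
              omega
            let Hc : Subgroup (Module.End F V)ˣ := G ⊓ Subgroup.centralizer {xu}
            have hMHc : M ∈ Hc := ⟨hM, Subgroup.mem_centralizer_iff.mpr (by
              rintro h hh
              rw [Set.mem_singleton_iff] at hh
              subst hh
              exact Units.ext (by simp only [Units.val_mul]; exact hgxM.symm))⟩
            have hNHc : N ∈ Hc := ⟨hN, Subgroup.mem_centralizer_iff.mpr (by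
              rintro h hh
              rw [Set.mem_singleton_iff] at hh
              subst hh
              exact Units.ext (by simp only [Units.val_mul]; exact hgxN.symm))⟩
            haveI hHcfin : Finite ↥Hc :=
              Finite.of_injective (Subgroup.inclusion (inf_le_left : Hc ≤ G))
                (Subgroup.inclusion_injective _)
            have hxcomm : ∀ h : ↥Hc, ((h : (Module.End F V)ˣ) : Module.End F V) * x
                = x * ((h : (Module.End F V)ˣ) : Module.End F V) := by
              intro h
              have h1 := Subgroup.mem_centralizer_iff.mp h.2.2 xu (Set.mem_singleton xu)
              have h2 := congrArg Units.val h1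
              simp only [Units.val_mul] at h2
              exact h2.symm
            have hpres : ∀ h : ↥Hc, ∀ w ∈ E,
                ((h : (Module.End F V)ˣ) : Module.End F V) w ∈ E := by
              intro h w hw
              rw [hE, LinearMap.mem_ker, LinearMap.sub_apply, LinearMap.smul_apply,
                Module.End.one_apply] at hw ⊢
              have hw' : x w = ν • w := by have := sub_eq_zero.mp hw; simpa using this
              have : x (((h : (Module.End F V)ˣ) : Module.End F V) w)
                  = ((h : (Module.End F V)ˣ) : Module.End F V) (x w) := by
                rw [← Module.End.mul_apply, ← Module.End.mul_apply, ← hxcomm h]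
              rw [this, hw', map_smul, sub_self]
            let r₀ : ↥Hc →* Module.End F ↥E :=
              { toFun := fun h =>
                  LinearMap.restrict ((h : (Module.End F V)ˣ) : Module.End F V) (hpres h)
                map_one' := by
                  ext w
                  simp [LinearMap.restrict_apply]
                map_mul' := by
                  intro h₁ h₂
                  ext w
                  simp [LinearMap.restrict_apply, Units.val_mul] }
            let ρ : ↥Hc →* (Module.End F ↥E)ˣ := r₀.toHomUnits
            let G' : Subgroup (Module.End F ↥E)ˣ := ρ.range
            haveI hG'fin : Finite ↥G' := by
              refine Finite.of_surjective (fun h : ↥Hc => (⟨ρ h, ⟨h, rfl⟩⟩ : ↥G')) ?_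
              rintro ⟨y, h, rfl⟩
              exact ⟨h, rfl⟩
            have hexp' : ∀ g ∈ G', g ^ p = 1 := by
              rintro g ⟨h, rfl⟩
              rw [← map_pow]
              have hh : h ^ p = 1 := Subtype.ext (by
                rw [SubmonoidClass.coe_pow, OneMemClass.coe_one]; exact hexp _ h.2.1)
              rw [hh, map_one]
            have hkey := ih ↥E hEfr G' hG'fin hexp' (ρ ⟨M, hMHc⟩) (ρ ⟨N, hNHc⟩)
              ⟨⟨M, hMHc⟩, rfl⟩ ⟨⟨N, hNHc⟩, rfl⟩
            have hw'E0 : (⟨((w' : ↥U) : V), hwE⟩ : ↥E) ≠ 0 := fun h =>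
              hw'0 (congrArg Subtype.val h)
            have hμE : μ ∈ spectrum F ((↑(ρ ⟨M, hMHc⟩ * ρ ⟨N, hNHc⟩) : Module.End F ↥E)) := by
              refine mem_spectrum_of_eigen hw'E0 ?_
              apply Subtype.ext
              show (M : Module.End F V) ((N : Module.End F V) ((w' : ↥U) : V))
                = μ • ((w' : ↥U) : V)
              have hcomp : MNe ((w' : ↥U) : V)
                  = (M : Module.End F V) ((N : Module.End F V) ((w' : ↥U) : V)) := by
                rw [hMNe, Units.val_mul, Module.End.mul_apply]
              rw [← hcomp, hMNw]
            obtain ⟨α, hα, β, hβ, hαβ⟩ := Set.mem_mul.mp (hkey hμE)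
            obtain ⟨w₁, hw₁0, hw₁⟩ := eigen_of_mem_spectrum hα
            obtain ⟨w₂, hw₂0, hw₂⟩ := eigen_of_mem_spectrum hβ
            have hw₁' : (M : Module.End F V) ((w₁ : ↥E) : V) = α • ((w₁ : ↥E) : V) :=
              congrArg Subtype.val hw₁
            have hw₂' : (N : Module.End F V) ((w₂ : ↥E) : V) = β • ((w₂ : ↥E) : V) :=
              congrArg Subtype.val hw₂
            refine Set.mem_mul.mpr ⟨α, ?_, β, ?_, hαβ⟩
            · exact mem_spectrum_of_eigen (fun h => hw₁0 (Subtype.ext h)) hw₁'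
            · exact mem_spectrum_of_eigen (fun h => hw₂0 (Subtype.ext h)) hw₂'
          · -- cN ≠ 1 : N has full spectrum
            intro μ hμ
            obtain ⟨u, hu0, huMN⟩ := eigen_of_mem_spectrum hμ
            have hμp : μ ^ p = 1 := eigen_pow_one hMNp hu0 huMN
            obtain ⟨α, hαe⟩ := Module.End.exists_eigenvalue (M : Module.End F V)
            obtain ⟨vα, hvα⟩ := hαe.exists_hasEigenvector
            have hαp : α ^ p = 1 := eigen_pow_one hMp hvα.right hvα.apply_eq_smul
            have hα0 : α ≠ 0 := fun h => by
              rw [h, zero_pow hp.ne_zero] at hαp; exact zero_ne_one hαp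
            have hαspec : α ∈ spectrum F (M : Module.End F V) :=
              mem_spectrum_of_eigen hvα.right hvα.apply_eq_smul
            have hω : (α⁻¹ * μ) ^ p = 1 := by
              rw [mul_pow, hμp, inv_pow, hαp, inv_one, one_mul]
            obtain ⟨w, hw0, hwN⟩ := full_spectrum_s13 hp N hNp x hxp hcN1 hcNp hgxN (α⁻¹ * μ) hω
            refine Set.mem_mul.mpr ⟨α, hαspec, α⁻¹ * μ, mem_spectrum_of_eigen hw0 hwN, ?_⟩
            rw [← mul_assoc, mul_inv_cancel₀ hα0, one_mul]
        · -- cM ≠ 1 : M has full spectrum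
          intro μ hμ
          obtain ⟨u, hu0, huMN⟩ := eigen_of_mem_spectrum hμ
          have hμp : μ ^ p = 1 := eigen_pow_one hMNp hu0 huMN
          obtain ⟨β, hβe⟩ := Module.End.exists_eigenvalue (N : Module.End F V)
          obtain ⟨vβ, hvβ⟩ := hβe.exists_hasEigenvector
          have hβp : β ^ p = 1 := eigen_pow_one hNp hvβ.right hvβ.apply_eq_smul
          have hβ0 : β ≠ 0 := fun h => by
            rw [h, zero_pow hp.ne_zero] at hβp; exact zero_ne_one hβp
          have hβspec : β ∈ spectrum F (N : Module.End F V) :=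
            mem_spectrum_of_eigen hvβ.right hvβ.apply_eq_smul
          have hω : (μ * β⁻¹) ^ p = 1 := by
            rw [mul_pow, hμp, inv_pow, hβp, inv_one, one_mul]
          obtain ⟨w, hw0, hwM⟩ := full_spectrum_s13 hp M hMp x hxp hcM1 hcMp hgxM (μ * β⁻¹) hω
          refine Set.mem_mul.mpr ⟨μ * β⁻¹, mem_spectrum_of_eigen hw0 hwM, β, hβspec, ?_⟩
          rw [mul_assoc, inv_mul_cancel₀ hβ0, mul_one]


/-- Every finite group of exponent `p` (`p` prime) has property Ŝ: every
representation of every subgroup over an algebraically closed field of characteristic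
zero has submultiplicative spectrum. -/
theorem stmt13 {F : Type*} [Field F] [IsAlgClosed F] [CharZero F]
    {G : Type*} [Group G] [Finite G] (p : ℕ) (hp : p.Prime)
    (hexp : ∀ g : G, g ^ p = 1) :
    PropertyShat F G := by
  classical
  intro K n ρ a b
  let e : Matrix (Fin n) (Fin n) F ≃ₐ[F] ((Fin n → F) →ₗ[F] (Fin n → F)) :=
    Matrix.toLinAlgEquiv'
  let φ : GL (Fin n) F →* (Module.End F (Fin n → F))ˣ :=
    Units.map e.toAlgHom.toRingHom.toMonoidHom
  let ρ' : ↥K →* (Module.End F (Fin n → F))ˣ := φ.comp ρ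
  let G' : Subgroup (Module.End F (Fin n → F))ˣ := ρ'.range
  have hG'fin : Finite ↥G' := by
    refine Finite.of_surjective (fun k : ↥K => (⟨ρ' k, ⟨k, rfl⟩⟩ : ↥G')) ?_
    rintro ⟨y, k, rfl⟩
    exact ⟨k, rfl⟩
  have hexp' : ∀ g ∈ G', g ^ p = 1 := by
    rintro g ⟨k, rfl⟩
    rw [← map_pow]
    have hk : k ^ p = 1 := Subtype.ext (hexp (k : G))
    rw [hk, map_one]
  have hkey := key_lemma hp (Module.finrank F (Fin n → F)) (Fin n → F) le_rfl G' hG'fin hexp'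
    (ρ' a) (ρ' b) ⟨a, rfl⟩ ⟨b, rfl⟩
  intro μ hμ
  have hμ' : μ ∈ spectrum F ((↑(ρ' a * ρ' b) : Module.End F (Fin n → F))) := by
    have h1 : (↑(ρ' a * ρ' b) : Module.End F (Fin n → F))
        = e ((ρ (a * b) : GL (Fin n) F) : Matrix (Fin n) (Fin n) F) := by
      rw [← map_mul ρ' a b]
      rfl
    rw [h1, AlgEquiv.spectrum_eq e]
    exact hμ
  obtain ⟨α, hα, β, hβ, hαβ⟩ := Set.mem_mul.mp (hkey hμ')
  have h2 : (↑(ρ' a) : Module.End F (Fin n → F))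
      = e ((ρ a : GL (Fin n) F) : Matrix (Fin n) (Fin n) F) := rfl
  have h3 : (↑(ρ' b) : Module.End F (Fin n → F))
      = e ((ρ b : GL (Fin n) F) : Matrix (Fin n) (Fin n) F) := rfl
  rw [h2, AlgEquiv.spectrum_eq e] at hα
  rw [h3, AlgEquiv.spectrum_eq e] at hβ
  exact Set.mem_mul.mpr ⟨α, hα, β, hβ, hαβ⟩
end

section
/- A finite 2-group has property Ŝ if and only if it is abelian. -/
open Pointwise

private lemma eig_mul_comm {F V : Type*} [Field F] [IsAlgClosed F] [AddCommGroup V] [Module F V]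
    [FiniteDimensional F V] {f g : Module.End F V} (hfg : f * g = g * f) {μ : F}
    (hμ : Module.End.HasEigenvalue (f * g) μ) :
    ∃ s t : F, f.HasEigenvalue s ∧ g.HasEigenvalue t ∧ μ = s * t := by
  classical
  have hW : Module.End.eigenspace (f * g) μ ≠ ⊥ := hμ
  have hfW : ∀ v ∈ Module.End.eigenspace (f * g) μ, f v ∈ Module.End.eigenspace (f * g) μ := by
    intro v hv
    rw [Module.End.mem_eigenspace_iff] at hv ⊢
    calc (f * g) (f v) = f ((g * f) v) := rfl
    _ = f ((f * g) v) := by rw [hfg]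
    _ = μ • f v := by rw [hv, map_smul]
  haveI : Nontrivial (Module.End.eigenspace (f * g) μ) := Submodule.nontrivial_iff_ne_bot.mpr hW
  obtain ⟨s, hs⟩ := Module.End.exists_eigenvalue (LinearMap.restrict f hfW)
  obtain ⟨v₁, hv₁⟩ := hs.exists_hasEigenvector
  have hv₁V : f (v₁ : V) = s • (v₁ : V) := by
    have h := congrArg Subtype.val hv₁.apply_eq_smul
    simpa [LinearMap.restrict_apply] using h
  set U := Module.End.eigenspace (f * g) μ ⊓ Module.End.eigenspace f s with hUdef
  have hv₁U : (v₁ : V) ∈ U := by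
    refine Submodule.mem_inf.mpr ⟨v₁.2, Module.End.mem_eigenspace_iff.mpr hv₁V⟩
  haveI : Nontrivial U := by
    refine Submodule.nontrivial_iff_ne_bot.mpr ((Submodule.ne_bot_iff U).mpr ⟨v₁, hv₁U, ?_⟩)
    simpa [Submodule.coe_eq_zero] using hv₁.right
  have hgU : ∀ v ∈ U, g v ∈ U := by
    intro v hv
    obtain ⟨hv1, hv2⟩ := Submodule.mem_inf.mp hv
    rw [Module.End.mem_eigenspace_iff] at hv1 hv2
    refine Submodule.mem_inf.mpr ⟨Module.End.mem_eigenspace_iff.mpr ?_,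
      Module.End.mem_eigenspace_iff.mpr ?_⟩
    · calc (f * g) (g v) = ((f * g) * g) v := rfl
      _ = (g * (f * g)) v := by
            conv_lhs => rw [hfg]
            rw [mul_assoc]
      _ = g ((f * g) v) := rfl
      _ = μ • g v := by rw [hv1, map_smul]
    · calc f (g v) = (f * g) v := rfl
      _ = (g * f) v := by rw [hfg]
      _ = s • g v := by show g (f v) = _; rw [hv2, map_smul]
  obtain ⟨t, ht⟩ := Module.End.exists_eigenvalue (LinearMap.restrict g hgU)
  obtain ⟨u, hu⟩ := ht.exists_hasEigenvector
  have huV : g (u : V) = t • (u : V) := by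
    have h := congrArg Subtype.val hu.apply_eq_smul
    simpa [LinearMap.restrict_apply] using h
  have hu0 : (u : V) ≠ 0 := by simpa [Submodule.coe_eq_zero] using hu.right
  obtain ⟨hu1, hu2⟩ := Submodule.mem_inf.mp u.2
  rw [Module.End.mem_eigenspace_iff] at hu1 hu2
  refine ⟨s, t, ?_, ?_, ?_⟩
  · exact Module.End.hasEigenvalue_of_hasEigenvector
      ⟨Module.End.mem_eigenspace_iff.mpr hu2, hu0⟩
  · exact Module.End.hasEigenvalue_of_hasEigenvector
      ⟨Module.End.mem_eigenspace_iff.mpr huV, hu0⟩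
  · have h1 : (f * g) (u : V) = (s * t) • (u : V) := by
      calc (f * g) (u : V) = f (g u) := rfl
      _ = f (t • (u : V)) := by rw [huV]
      _ = t • (s • (u : V)) := by rw [map_smul, hu2]
      _ = (s * t) • (u : V) := by rw [smul_smul, mul_comm]
    have h2 : μ • (u : V) = (s * t) • (u : V) := by rw [← hu1, h1]
    have := sub_eq_zero.mpr h2
    rw [← sub_smul] at this
    rcases smul_eq_zero.mp this with h | h
    · exact sub_eq_zero.mp h
    · exact absurd h hu0

private lemma spec_mul_subset_of_comm {F : Type*} [Field F] [IsAlgClosed F] {n : ℕ}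
    {A B : Matrix (Fin n) (Fin n) F} (hAB : A * B = B * A) :
    spectrum F (A * B) ⊆ spectrum F A * spectrum F B := by
  intro μ hμ
  let e := Matrix.toLinAlgEquiv' (R := F) (n := Fin n)
  have hEq : ∀ M : Matrix (Fin n) (Fin n) F, spectrum F (e M) = spectrum F M := fun M =>
    AlgEquiv.spectrum_eq e M
  have hμ' : Module.End.HasEigenvalue (e A * e B) μ := by
    rw [Module.End.hasEigenvalue_iff_mem_spectrum, ← map_mul, hEq]
    exact hμ
  have hcomm : e A * e B = e B * e A := by rw [← map_mul, ← map_mul, hAB]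
  obtain ⟨s, t, hsf, htg, hμst⟩ := eig_mul_comm hcomm hμ'
  rw [hμst]
  refine Set.mul_mem_mul ?_ ?_
  · rw [← hEq A]; exact Module.End.hasEigenvalue_iff_mem_spectrum.mp hsf
  · rw [← hEq B]; exact Module.End.hasEigenvalue_iff_mem_spectrum.mp htg

private lemma shat_of_comm {F : Type*} [Field F] [IsAlgClosed F] {G : Type*} [Group G]
    (hab : ∀ x y : G, x * y = y * x) : PropertyShat F G := by
  intro K n ρ a b
  have h1 : a * b = b * a := Subtype.ext (hab a b)
  have hcomm : ((ρ a : GL (Fin n) F) : Matrix (Fin n) (Fin n) F) *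
      ((ρ b : GL (Fin n) F) : Matrix (Fin n) (Fin n) F) =
      ((ρ b : GL (Fin n) F) : Matrix (Fin n) (Fin n) F) *
      ((ρ a : GL (Fin n) F) : Matrix (Fin n) (Fin n) F) := by
    have h2 : ρ a * ρ b = ρ b * ρ a := by rw [← map_mul, ← map_mul, h1]
    exact congrArg Units.val h2
  have hmat : ((ρ (a * b) : GL (Fin n) F) : Matrix (Fin n) (Fin n) F) =
      ((ρ a : GL (Fin n) F) : Matrix (Fin n) (Fin n) F) *
      ((ρ b : GL (Fin n) F) : Matrix (Fin n) (Fin n) F) := by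
    rw [map_mul]; rfl
  rw [hmat]
  exact spec_mul_subset_of_comm hcomm

private lemma hard_dir {F : Type*} [Field F] [IsAlgClosed F] [CharZero F]
    {G : Type*} [Group G] [Finite G] (hpG : IsPGroup 2 G)
    (hS : PropertyShat F G) : ∀ x y : G, x * y = y * x := by
  classical
  by_contra hcomm
  push_neg at hcomm
  obtain ⟨x₀, y₀, hxy₀⟩ := hcomm
  haveI : Fact (Nat.Prime 2) := ⟨Nat.prime_two⟩
  have hBadTop : ∃ a b : (⊤ : Subgroup G), a * b ≠ b * a :=
    ⟨⟨x₀, trivial⟩, ⟨y₀, trivial⟩, fun h => hxy₀ (congrArg Subtype.val h)⟩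
  have hex : ∃ m : ℕ, ∃ K : Subgroup G, (∃ a b : K, a * b ≠ b * a) ∧ Nat.card K = m :=
    ⟨Nat.card (⊤ : Subgroup G), ⊤, hBadTop, rfl⟩
  obtain ⟨K, hKbad, hKcard⟩ := Nat.find_spec hex
  have hmin : ∀ K' : Subgroup G, (∃ a b : K', a * b ≠ b * a) → Nat.card K ≤ Nat.card K' := by
    intro K' h
    rw [hKcard]
    exact Nat.find_min' hex ⟨K', h, rfl⟩
  obtain ⟨a₀, b₀, hab₀⟩ := hKbad
  have hpK : IsPGroup 2 K := hpG.to_subgroup K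
  obtain ⟨nn, hnn⟩ := IsPGroup.iff_card.mp hpK
  have hnn0 : nn ≠ 0 := by
    intro h
    rw [h, pow_zero] at hnn
    haveI := (Nat.card_eq_one_iff_unique.mp hnn).1
    exact hab₀ (Subsingleton.elim _ _)
  obtain ⟨A, hA⟩ := Sylow.exists_subgroup_card_pow_prime (G := K) 2
    (n := nn - 1) (by rw [hnn]; exact pow_dvd_pow 2 (Nat.sub_le nn 1))
  have hAidx : A.index = 2 := by
    have h := Subgroup.card_mul_index A
    rw [hA, hnn] at h
    have h2 : (2:ℕ)^nn = 2^(nn-1) * 2 := by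
      rw [← pow_succ, Nat.sub_add_cancel (Nat.one_le_iff_ne_zero.mpr hnn0)]
    rw [h2] at h
    exact Nat.eq_of_mul_eq_mul_left (Nat.pos_of_ne_zero (pow_ne_zero _ two_ne_zero)) h
  have mIff : ∀ {g h : K}, g * h ∈ A ↔ (g ∈ A ↔ h ∈ A) :=
    fun {g h} => Subgroup.mul_mem_iff_of_index_two hAidx
  -- A is abelian
  have hAcomm : ∀ u v : A, u * v = v * u := by
    by_contra hc
    push_neg at hc
    obtain ⟨u, v, huv⟩ := hc
    have hbad' : ∃ a b : (Subgroup.map K.subtype A), a * b ≠ b * a := by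
      let e := A.equivMapOfInjective K.subtype K.subtype_injective
      exact ⟨e u, e v, fun h => huv (e.injective (by rw [map_mul, map_mul]; exact h))⟩
    have hlt : Nat.card (Subgroup.map K.subtype A) < Nat.card K := by
      have hcard : Nat.card (Subgroup.map K.subtype A) = Nat.card A :=
        (Nat.card_congr (A.equivMapOfInjective K.subtype K.subtype_injective).toEquiv).symm
      rw [hcard, hA, hnn]
      exact Nat.pow_lt_pow_right one_lt_two (Nat.sub_lt (Nat.pos_of_ne_zero hnn0) one_pos)
    exact absurd (hmin _ hbad') (not_le.mpr hlt)
  have hAc : ∀ p q : K, p ∈ A → q ∈ A → p * q = q * p := fun p q hp hq =>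
    congrArg Subtype.val (hAcomm ⟨p, hp⟩ ⟨q, hq⟩)
  -- get y ∉ A
  obtain ⟨y, hyA⟩ : ∃ y : K, y ∉ A := by
    by_contra h
    push_neg at h
    have htop : A = ⊤ := (Subgroup.eq_top_iff' A).mpr h
    rw [htop, Subgroup.index_top] at hAidx
    norm_num at hAidx
  have hinv : y⁻¹ ∉ A := fun hy => hyA (by simpa using A.inv_mem hy)
  -- get x ∈ A not commuting with y
  obtain ⟨x, hxA, hxy⟩ : ∃ x, x ∈ A ∧ x * y ≠ y * x := by
    by_contra h
    push_neg at h
    have hyc : ∀ g : K, g ∈ A → g * y = y * g := h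
    have dec : ∀ g : K, g ∉ A → ∃ c, c ∈ A ∧ g = c * y := by
      intro g hg
      refine ⟨g * y⁻¹, ?_, by group⟩
      exact mIff.mpr (iff_of_false hg hinv)
    have comy : ∀ g : K, g * y = y * g := by
      intro g
      by_cases hg : g ∈ A
      · exact hyc g hg
      · obtain ⟨c, hc, rfl⟩ := dec g hg
        rw [← mul_assoc, hyc c hc]
    have e1 : ∀ c d : K, (c*y)*(d*y) = (c*d)*(y*y) := by
      intro c d
      calc (c*y)*(d*y) = c*(y*(d*y)) := mul_assoc _ _ _
        _ = c*((d*y)*y) := by rw [← comy (d*y)]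
        _ = c*(d*(y*y)) := by rw [mul_assoc]
        _ = (c*d)*(y*y) := (mul_assoc _ _ _).symm
    have key : ∀ g h' : K, g * h' = h' * g := by
      intro g h'
      by_cases hg : g ∈ A <;> by_cases hh : h' ∈ A
      · exact hAc g h' hg hh
      · obtain ⟨c, hc, rfl⟩ := dec h' hh
        calc g*(c*y) = (g*c)*y := (mul_assoc _ _ _).symm
          _ = (c*g)*y := by rw [hAc g c hg hc]
          _ = c*(g*y) := mul_assoc _ _ _
          _ = c*(y*g) := by rw [comy g]
          _ = (c*y)*g := (mul_assoc _ _ _).symm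
      · obtain ⟨c, hc, rfl⟩ := dec g hg
        calc (c*y)*h' = c*(y*h') := mul_assoc _ _ _
          _ = c*(h'*y) := by rw [← comy h']
          _ = (c*h')*y := (mul_assoc _ _ _).symm
          _ = (h'*c)*y := by rw [hAc c h' hc hh]
          _ = h'*(c*y) := mul_assoc _ _ _
      · obtain ⟨c, hc, rfl⟩ := dec g hg
        obtain ⟨d, hd, rfl⟩ := dec h' hh
        rw [e1 c d, e1 d c, hAc c d hc hd]
    exact hab₀ (key a₀ b₀)
  -- membership facts
  have mem_y2 : y * y ∈ A := mIff.mpr (iff_of_false hyA hyA)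
  have memA : ∀ g : K, g ∈ A → y⁻¹ * g * y ∈ A := by
    intro g hg
    have h1 : y⁻¹ * g ∉ A := fun hmem => hinv (mIff.mp hmem |>.mpr hg)
    exact mIff.mpr (iff_of_false h1 hyA)
  have memB : ∀ g : K, g ∉ A → g * y ∈ A := fun g hg => mIff.mpr (iff_of_false hg hyA)
  have memC : ∀ g : K, g ∉ A → y⁻¹ * g ∈ A := fun g hg => mIff.mpr (iff_of_false hinv hg)
  -- the commutator w
  set w : K := x⁻¹ * (y⁻¹ * x * y) with hwdef
  have hwA : w ∈ A := A.mul_mem (A.inv_mem hxA) (memA x hxA)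
  have hw1 : w ≠ 1 := by
    intro h
    have h2 : x = y⁻¹ * x * y := inv_mul_eq_one.mp h
    refine hxy ?_
    have h3 : y * x = y * (y⁻¹ * x * y) := by rw [← h2]
    calc x * y = y * (y⁻¹ * x * y) := by group
      _ = y * x := h3.symm
  -- character on A
  letI : CommGroup A := { (inferInstance : Group A) with mul_comm := hAcomm }
  haveI : NeZero ((Monoid.exponent A : ℕ) : F) :=
    ⟨Nat.cast_ne_zero.mpr Monoid.exponent_ne_zero_of_finite⟩
  obtain ⟨χ, hχ⟩ := CommGroup.exists_apply_ne_one_of_hasEnoughRootsOfUnity A F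
    (a := ⟨w, hwA⟩) (fun h => hw1 (by simpa using congrArg Subtype.val h))
  obtain ⟨χ₀, hχ₀def⟩ : ∃ c : K → F, ∀ g, c g = if hg : g ∈ A then (χ ⟨g, hg⟩ : F) else 0 :=
    ⟨_, fun g => rfl⟩
  have hχ₀val : ∀ (g : K) (hg : g ∈ A), χ₀ g = (χ ⟨g, hg⟩ : F) := by
    intro g hg; rw [hχ₀def g, dif_pos hg]
  have hχ₀mul : ∀ g h : K, g ∈ A → h ∈ A → χ₀ (g * h) = χ₀ g * χ₀ h := by
    intro g h hg hh
    rw [hχ₀val g hg, hχ₀val h hh, hχ₀val (g*h) (A.mul_mem hg hh), ← Units.val_mul, ← map_mul]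
    rfl
  have hχ₀ne : ∀ (g : K), g ∈ A → χ₀ g ≠ 0 := fun g hg => by
    rw [hχ₀val g hg]; exact Units.ne_zero _
  have hχ₀one : χ₀ 1 = 1 := by
    rw [hχ₀val 1 A.one_mem, show (⟨1, A.one_mem⟩ : A) = 1 from rfl, map_one, Units.val_one]
  -- the representation matrix
  obtain ⟨fmat, hfdef⟩ : ∃ f : K → Matrix (Fin 2) (Fin 2) F, ∀ g, f g =
      if g ∈ A then !![χ₀ g, 0; 0, χ₀ (y⁻¹ * g * y)] else !![0, χ₀ (g * y); χ₀ (y⁻¹ * g), 0] :=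
    ⟨_, fun g => rfl⟩
  have hf1 : fmat 1 = 1 := by
    rw [hfdef, if_pos A.one_mem, show (y⁻¹ * 1 * y : K) = 1 by rw [mul_one, inv_mul_cancel],
      hχ₀one, Matrix.one_fin_two]
  have hfmul : ∀ g h : K, fmat (g * h) = fmat g * fmat h := by
    intro g h
    by_cases hg : g ∈ A <;> by_cases hh : h ∈ A
    · have hgh : g * h ∈ A := A.mul_mem hg hh
      rw [hfdef, hfdef, hfdef, if_pos hg, if_pos hh, if_pos hgh, Matrix.mul_fin_two]
      have e1 : χ₀ (g * h) = χ₀ g * χ₀ h := hχ₀mul g h hg hh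
      have e2 : χ₀ (y⁻¹ * (g * h) * y) = χ₀ (y⁻¹ * g * y) * χ₀ (y⁻¹ * h * y) := by
        rw [← hχ₀mul _ _ (memA g hg) (memA h hh)]
        congr 1
        group
      rw [e1, e2]
      congr 1 <;> ring_nf
    · have hgh : g * h ∉ A := fun hmem => hh ((mIff.mp hmem).mp hg)
      rw [hfdef, hfdef, hfdef, if_pos hg, if_neg hh, if_neg hgh, Matrix.mul_fin_two]
      have e1 : χ₀ (g * h * y) = χ₀ g * χ₀ (h * y) := by
        rw [← hχ₀mul _ _ hg (memB h hh)]
        congr 1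
        group
      have e2 : χ₀ (y⁻¹ * (g * h)) = χ₀ (y⁻¹ * g * y) * χ₀ (y⁻¹ * h) := by
        rw [← hχ₀mul _ _ (memA g hg) (memC h hh)]
        congr 1
        group
      rw [e1, e2]
      congr 1 <;> ring_nf
    · have hgh : g * h ∉ A := fun hmem => hg ((mIff.mp hmem).mpr hh)
      rw [hfdef, hfdef, hfdef, if_neg hg, if_pos hh, if_neg hgh, Matrix.mul_fin_two]
      have e1 : χ₀ (g * h * y) = χ₀ (g * y) * χ₀ (y⁻¹ * h * y) := by
        rw [← hχ₀mul _ _ (memB g hg) (memA h hh)]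
        congr 1
        group
      have e2 : χ₀ (y⁻¹ * (g * h)) = χ₀ (y⁻¹ * g) * χ₀ h := by
        rw [← hχ₀mul _ _ (memC g hg) hh]
        congr 1
        group
      rw [e1, e2]
      congr 1 <;> ring_nf
    · have hgh : g * h ∈ A := mIff.mpr (iff_of_false hg hh)
      rw [hfdef, hfdef, hfdef, if_neg hg, if_neg hh, if_pos hgh, Matrix.mul_fin_two]
      have e1 : χ₀ (g * h) = χ₀ (g * y) * χ₀ (y⁻¹ * h) := by
        rw [← hχ₀mul _ _ (memB g hg) (memC h hh)]
        congr 1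
        group
      have e2 : χ₀ (y⁻¹ * (g * h) * y) = χ₀ (y⁻¹ * g) * χ₀ (h * y) := by
        rw [← hχ₀mul _ _ (memC g hg) (memB h hh)]
        congr 1
        group
      rw [e1, e2]
      congr 1 <;> ring_nf
  -- apply property Ŝ
  have hsub := hS K 2 (MonoidHom.toHomUnits ⟨⟨fmat, hf1⟩, hfmul⟩) x y
  simp only [MonoidHom.coe_toHomUnits, MonoidHom.coe_mk, OneHom.coe_mk] at hsub
  -- spectrum helper
  have hspec : ∀ (M : Matrix (Fin 2) (Fin 2) F) (μ : F),
      μ ∈ spectrum F M ↔ ((algebraMap F (Matrix (Fin 2) (Fin 2) F)) μ - M).det = 0 := by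
    intro M μ
    rw [spectrum.mem_iff, Matrix.isUnit_iff_isUnit_det, isUnit_iff_ne_zero, not_not]
  have halg : ∀ μ : F, (algebraMap F (Matrix (Fin 2) (Fin 2) F)) μ = !![μ, 0; 0, μ] := by
    intro μ
    ext i j
    fin_cases i <;> fin_cases j <;> simp [Matrix.algebraMap_matrix_apply]
  have hxyA : x * y ∉ A := fun hmem => hyA ((mIff.mp hmem).mp hxA)
  have fy : fmat y = !![0, χ₀ (y * y); 1, 0] := by
    rw [hfdef, if_neg hyA, show (y⁻¹ * y : K) = 1 from inv_mul_cancel y, hχ₀one]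
  have fx : fmat x = !![χ₀ x, 0; 0, χ₀ (y⁻¹ * x * y)] := by rw [hfdef, if_pos hxA]
  have fxy : fmat (x * y) = !![0, χ₀ (x * y * y); χ₀ (y⁻¹ * (x * y)), 0] := by
    rw [hfdef, if_neg hxyA]
  have hq : χ₀ (x * y * y) * χ₀ (y⁻¹ * (x * y)) = χ₀ x * χ₀ (y * y) * χ₀ (y⁻¹ * x * y) := by
    rw [show (x * y * y : K) = x * (y * y) from mul_assoc _ _ _,
      hχ₀mul x (y * y) hxA mem_y2,
      show (y⁻¹ * (x * y) : K) = y⁻¹ * x * y from (mul_assoc _ _ _).symm]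
  obtain ⟨μ, hμ2⟩ := IsAlgClosed.exists_pow_nat_eq (χ₀ x * χ₀ (y * y) * χ₀ (y⁻¹ * x * y))
    (n := 2) two_pos
  have hμmem : μ ∈ spectrum F (fmat (x * y)) := by
    rw [hspec, fxy, halg]
    have hsubm : !![μ, 0; 0, μ] - !![0, χ₀ (x * y * y); χ₀ (y⁻¹ * (x * y)), 0]
        = !![μ, -χ₀ (x * y * y); -χ₀ (y⁻¹ * (x * y)), μ] := by
      ext i j
      fin_cases i <;> fin_cases j <;> simp
    rw [hsubm, Matrix.det_fin_two_of]
    linear_combination hμ2 - hq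
  have hμmem2 := hsub hμmem
  rw [fx, fy] at hμmem2
  obtain ⟨s, hs, t, ht, hst⟩ := Set.mem_mul.mp hμmem2
  -- analyze s
  rw [hspec, halg] at hs
  have hds : !![s, 0; 0, s] - !![χ₀ x, 0; 0, χ₀ (y⁻¹ * x * y)]
      = !![s - χ₀ x, 0; 0, s - χ₀ (y⁻¹ * x * y)] := by
    ext i j
    fin_cases i <;> fin_cases j <;> simp
  rw [hds, Matrix.det_fin_two_of, mul_zero, sub_zero] at hs
  have hs' : s = χ₀ x ∨ s = χ₀ (y⁻¹ * x * y) := by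
    rcases mul_eq_zero.mp hs with h | h
    · exact Or.inl (sub_eq_zero.mp h)
    · exact Or.inr (sub_eq_zero.mp h)
  -- analyze t
  rw [hspec, halg] at ht
  have hdt : !![t, 0; 0, t] - !![0, χ₀ (y * y); 1, 0] = !![t, -χ₀ (y * y); -1, t] := by
    ext i j
    fin_cases i <;> fin_cases j <;> simp
  rw [hdt, Matrix.det_fin_two_of] at ht
  have htt : t * t = χ₀ (y * y) := by linear_combination ht
  -- conclude
  have hμμ : μ * μ = χ₀ x * χ₀ (y * y) * χ₀ (y⁻¹ * x * y) := by
    rw [← hμ2]; ring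
  have hβ : χ₀ (y * y) ≠ 0 := hχ₀ne _ mem_y2
  have hssr : s * s = χ₀ x * χ₀ (y⁻¹ * x * y) := by
    have h' : (s * s) * χ₀ (y * y) = (χ₀ x * χ₀ (y⁻¹ * x * y)) * χ₀ (y * y) := by
      calc (s * s) * χ₀ (y * y) = (s * t) * (s * t) := by rw [← htt]; ring
        _ = μ * μ := by rw [hst]
        _ = (χ₀ x * χ₀ (y⁻¹ * x * y)) * χ₀ (y * y) := by rw [hμμ]; ring
    exact mul_right_cancel₀ hβ h'
  have hα : χ₀ x ≠ 0 := hχ₀ne x hxA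
  have hα' : χ₀ (y⁻¹ * x * y) ≠ 0 := hχ₀ne _ (memA x hxA)
  have hαα' : χ₀ x = χ₀ (y⁻¹ * x * y) := by
    rcases hs' with h | h
    · rw [h] at hssr
      exact mul_left_cancel₀ hα hssr
    · rw [h] at hssr
      exact (mul_right_cancel₀ hα' hssr).symm
  -- contradiction with character value on w
  apply hχ
  have hw_eq : (⟨w, hwA⟩ : A) = (⟨x, hxA⟩ : A)⁻¹ * ⟨y⁻¹ * x * y, memA x hxA⟩ := by
    apply Subtype.ext
    rfl
  have hval : χ ⟨x, hxA⟩ = χ ⟨y⁻¹ * x * y, memA x hxA⟩ := by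
    apply Units.ext
    rw [← hχ₀val x hxA, ← hχ₀val _ (memA x hxA)]
    exact hαα'
  rw [hw_eq, map_mul, map_inv, ← hval, inv_mul_cancel]


/-- A finite `2`-group has property Ŝ if and only if it is abelian. -/
theorem stmt15 {F : Type*} [Field F] [IsAlgClosed F] [CharZero F]
    {G : Type*} [Group G] [Finite G] (hpG : IsPGroup 2 G) :
    PropertyShat F G ↔ ∀ x y : G, x * y = y * x :=
  ⟨fun hS => hard_dir hpG hS, fun h => shat_of_comm h⟩
end

section
/- For every prime p, positive integers k and i with 1 ≤ i ≤ p−2, and η a p^k-th root of unity in F, the diagonal matrix D_k(i,η) ∈ GL_{p^k}(F) with diagonal entries η^{C(j,i)} for j = 0, 1, ..., p^k − 1 has determinant 1, where C(j,i) is the binomial coefficient (taken as 0 when j < i). -/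
lemma aux_sum_choose (n i : ℕ) (hin : i < n) :
    ∑ j ∈ Finset.range n, j.choose i = n.choose (i + 1) := by
  have h : ∑ j ∈ Finset.Icc i (n - 1), j.choose i = n.choose (i + 1) := by
    have := Nat.sum_Icc_choose (n - 1) i
    rwa [Nat.sub_add_cancel (Nat.one_le_of_lt hin)] at this
  rw [← h]
  symm
  apply Finset.sum_subset
  · intro x hx
    simp only [Finset.mem_Icc, Finset.mem_range] at *
    omega
  · intro x _ hx
    simp only [Finset.mem_Icc] at hx
    have : x < i := by
      by_contra h'
      exact hx ⟨le_of_not_gt h', by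
        simp only [Finset.mem_range] at *; omega⟩
    exact Nat.choose_eq_zero_of_lt this

/-- For a prime `p`, positive integers `k` and `i` with `1 ≤ i ≤ p - 2`,
and `η` a `p^k`-th root of unity in `F`, the diagonal matrix `D_k(i, η) ∈ GL_{p^k}(F)`
with diagonal entries `η^(C(j, i))` for `j = 0, 1, …, p^k - 1` has determinant `1`. -/
theorem stmt17 {F : Type*} [Field F] [IsAlgClosed F] [CharZero F]
    (p k i : ℕ) (hp : p.Prime) (hk : 1 ≤ k) (hi : 1 ≤ i) (hip : i ≤ p - 2)
    (η : F) (hη : η ^ (p ^ k) = 1) :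
    (Matrix.diagonal fun j : Fin (p ^ k) => η ^ ((j : ℕ).choose i)).det = 1 := by
  have hp2 : 2 ≤ p := hp.two_le
  have hppk : p ≤ p ^ k := Nat.le_self_pow (by omega) p
  have hin : i < p ^ k := by omega
  rw [Matrix.det_diagonal, Finset.prod_pow_eq_pow_sum]
  have hsum : ∑ j : Fin (p ^ k), (j : ℕ).choose i = (p ^ k).choose (i + 1) := by
    rw [Fin.sum_univ_eq_sum_range (fun j => j.choose i)]
    exact aux_sum_choose _ _ hin
  rw [hsum]
  -- p^k divides the binomial coefficient
  have hdvd : p ^ k ∣ (p ^ k).choose (i + 1) := by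
    have key : (i + 1) * (p ^ k).choose (i + 1) = p ^ k * (p ^ k - 1).choose i := by
      have := Nat.add_one_mul_choose_eq (p ^ k - 1) i
      simp only [Nat.succ_eq_add_one, Nat.sub_add_cancel (by omega : 1 ≤ p ^ k)] at this
      linarith [this]
    have hcop : Nat.Coprime (p ^ k) (i + 1) :=
      Nat.Coprime.pow_left k ((hp.coprime_iff_not_dvd).mpr
        (Nat.not_dvd_of_pos_of_lt (by omega) (by omega)))
    exact hcop.dvd_of_dvd_mul_left ⟨(p ^ k - 1).choose i, by linarith [key]⟩
  obtain ⟨m, hm⟩ := hdvd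
  rw [hm, pow_mul, hη, one_pow]
end
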